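/- arXiv:1701.04120 — 12 statements merged into one kernel-verified Lean document; each statement's English description precedes it below -/
import Mathlib

section
/- Let k < n = q^t and let g_1,…,g_t ∈ F[x] be polynomials of degree at most n−k−1 such that rank_q{g_1(α*),…,g_t(α*)} = t, where α* ∈ F. Then for any two polynomials f, f' ∈ F[x] of degree at most k−1 satisfying Tr(g_i(α)·f(α)) = Tr(g_i(α)·f'(α)) for every α ∈ F∖{α*} and every i ∈ {1,…,t}, one has f(α*) = f'(α*). In other words, the value f(α*) of any codeword of the full-length Reed–Solomon code RS(F,k) is uniquely determined by the traces {Tr(g_i(α)f(α)) : α ∈ F∖{α*}, i ∈ {1,…,t}}. -/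
open Polynomial

lemma sum_eval_eq_zero_of_natDegree_lt {F : Type*} [Field F] [Fintype F] (p : F[X])
    (hp : p.natDegree < Fintype.card F - 1) : ∑ x : F, p.eval x = 0 := by
  classical
  simp_rw [eval_eq_sum_range]
  rw [Finset.sum_comm]
  apply Finset.sum_eq_zero
  intro j hj
  rw [← Finset.mul_sum, FiniteField.sum_pow_lt_card_sub_one F j
    (lt_of_le_of_lt (Nat.lt_succ_iff.mp (Finset.mem_range.mp hj)) hp), mul_zero]

/-- For the full-length Reed–Solomon code `RS(F, k)` over `F = GF(q^t)`
(with `k < n = q^t`), if `g₁, …, g_t` are polynomials of degree at most `n - k - 1` whose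
values at `α*` have rank `t` over `B = GF(q)`, then the traces
`Tr(gᵢ(α) f(α))`, `α ∈ F \ {α*}`, `i ∈ [t]`, uniquely determine `f(α*)`. -/
theorem repair_determines_value
    (q t k n : ℕ) (B F : Type*) [Field B] [Fintype B] [Field F] [Fintype F]
    [Algebra B F]
    (hq : Fintype.card B = q) (ht : Module.finrank B F = t)
    (hn : n = q ^ t) (hcardF : Fintype.card F = n) (hk : k < n)
    (αstar : F) (g : Fin t → F[X])
    (hdeg : ∀ i, (g i).degree ≤ ((n - k - 1 : ℕ) : WithBot ℕ))
    (hrank : Module.finrank B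
      (Submodule.span B (Set.range fun i => (g i).eval αstar)) = t)
    (f f' : F[X]) (hf : f.degree < (k : WithBot ℕ)) (hf' : f'.degree < (k : WithBot ℕ))
    (htr : ∀ α : F, α ≠ αstar → ∀ i : Fin t,
      Algebra.trace B F ((g i).eval α * f.eval α)
        = Algebra.trace B F ((g i).eval α * f'.eval α)) :
    f.eval αstar = f'.eval αstar := by
  classical
  set h : F[X] := f - f' with hh
  suffices hz : h.eval αstar = 0 by
    have := hz
    simp only [hh, eval_sub, sub_eq_zero] at this
    exact this
  by_cases hne : h = 0
  · simp [hne]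
  -- h has degree < k, in particular k ≥ 1
  have hdegh : h.degree < (k : WithBot ℕ) := lt_of_le_of_lt (degree_sub_le f f') (max_lt hf hf')
  have hk1 : 1 ≤ k := by
    rcases Nat.eq_zero_or_pos k with rfl | hpos
    · simp only [Nat.cast_zero] at hdegh
      exact absurd (degree_eq_bot.mp (Nat.WithBot.lt_zero_iff.mp hdegh)) hne
    · exact hpos
  -- trace at αstar equals 0 for all i
  have hkey : ∀ i : Fin t, Algebra.trace B F ((g i).eval αstar * h.eval αstar) = 0 := by
    intro i
    have hsum : ∑ α : F, ((g i) * h).eval α = 0 := by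
      by_cases hgi : g i = 0
      · simp [hgi]
      apply sum_eval_eq_zero_of_natDegree_lt
      rw [natDegree_mul hgi hne, hcardF]
      have h1 : (g i).natDegree ≤ n - k - 1 := natDegree_le_iff_degree_le.mpr (hdeg i)
      have h2 : h.natDegree < k := (natDegree_lt_iff_degree_lt hne).mpr hdegh
      omega
    have htrsum : ∑ α : F, Algebra.trace B F ((g i).eval α * h.eval α) = 0 := by
      rw [← map_sum]
      simp_rw [← eval_mul, hsum, map_zero]
    rw [← Finset.sum_erase_add _ _ (Finset.mem_univ αstar)] at htrsum
    have hrest : ∑ α ∈ Finset.univ.erase αstar,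
        Algebra.trace B F ((g i).eval α * h.eval α) = 0 := by
      apply Finset.sum_eq_zero
      intro α hα
      have hαne : α ≠ αstar := (Finset.mem_erase.mp hα).1
      simp only [hh, eval_sub, mul_sub, map_sub]
      rw [htr α hαne i, sub_self]
    rw [hrest, zero_add] at htrsum
    exact htrsum
  -- span of values is all of F
  have hspan : Submodule.span B (Set.range fun i => (g i).eval αstar) = ⊤ :=
    Submodule.eq_top_of_finrank_eq (by rw [hrank, ht])
  -- all traces vanish
  have hall : ∀ c : F, Algebra.trace B F (c * h.eval αstar) = 0 := by
    intro c
    have hc : c ∈ Submodule.span B (Set.range fun i => (g i).eval αstar) := by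
      rw [hspan]; trivial
    have hle : Submodule.span B (Set.range fun i => (g i).eval αstar) ≤
        LinearMap.ker ((Algebra.traceForm B F).flip (h.eval αstar)) := by
      rw [Submodule.span_le]
      rintro _ ⟨i, rfl⟩
      simpa [Algebra.traceForm_apply] using hkey i
    simpa [Algebra.traceForm_apply] using hle hc
  have hnd := traceForm_nondegenerate B F
  apply hnd.1
  intro c
  rw [Algebra.traceForm_apply, mul_comm]
  exact hall c
end

section
/- Let A ⊆ F with |A| = n, let α* ∈ A, and let r ≥ 1 be an integer. Suppose g_1,…,g_t ∈ F[x] are polynomials of degree at most r−1 with rank_q{g_1(α*),…,g_t(α*)} = t. For each α ∈ A∖{α*} let b_α = rank_q{g_1(α),…,g_t(α)}. Then Σ_{α ∈ A∖{α*}} q^{−b_α} ≤ ((r−1)(q^t−1)+(n−1))/q^t. -/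
open Polynomial
open scoped Classical

/-- the feasibility inequality (5) in the proof of Proposition 1.
If `g₁, …, g_t` have degree at most `r - 1` and `rank_q {g₁(α*), …, g_t(α*)} = t`, then
`Σ_{α ∈ A \ {α*}} q^{-b_α} ≤ ((r-1)(q^t - 1) + (n-1)) / q^t`. -/
theorem feasibility_inequality
    (q t r n : ℕ) (B F : Type*) [Field B] [Fintype B] [Field F] [Fintype F]
    [Algebra B F]
    (hq : Fintype.card B = q) (ht : Module.finrank B F = t)
    (A : Finset F) (hn : A.card = n)
    (αstar : F) (hαstar : αstar ∈ A)
    (hr : 1 ≤ r)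
    (g : Fin t → F[X])
    (hdeg : ∀ i, (g i).degree ≤ ((r - 1 : ℕ) : WithBot ℕ))
    (hrank : Module.finrank B
      (Submodule.span B (Set.range fun i => (g i).eval αstar)) = t)
    (b : F → ℕ)
    (hb : ∀ α : F, b α = Module.finrank B
      (Submodule.span B (Set.range fun i => (g i).eval α))) :
    ∑ α ∈ A.erase αstar, ((q : ℝ) ^ (b α))⁻¹
      ≤ (((r : ℝ) - 1) * ((q : ℝ) ^ t - 1) + ((n : ℝ) - 1)) / (q : ℝ) ^ t := by
  have hqpos : 0 < q := hq ▸ Fintype.card_pos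
  have hcardF : Fintype.card F = q ^ t := by
    rw [← hq, ← ht]; exact Module.card_eq_pow_finrank (K := B) (V := F)
  -- the linear map c ↦ ∑ c i • g i (α)
  set φ : F → ((Fin t → B) →ₗ[B] F) :=
    fun α => Fintype.linearCombination B (fun i => (g i).eval α) with hφ
  have hφapp : ∀ α c, φ α c = ∑ i, c i • (g i).eval α := fun α c => rfl
  have hrange : ∀ α, LinearMap.range (φ α)
      = Submodule.span B (Set.range fun i => (g i).eval α) :=
    fun α => Fintype.range_linearCombination B (fun i => (g i).eval α)
  -- finrank of kernel
  have hdim : Module.finrank B (Fin t → B) = t := by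
    simp [Module.finrank_pi]
  have hble : ∀ α, b α ≤ t := by
    intro α
    have h := (φ α).finrank_range_le
    rw [hrange α, hdim] at h
    rw [hb α]; exact h
  have hker : ∀ α, Module.finrank B (LinearMap.ker (φ α)) = t - b α := by
    intro α
    have := (φ α).finrank_range_add_finrank_ker
    rw [hdim, hrange α, ← hb α] at this
    omega
  -- cardinality of kernel
  have hScard : ∀ α, (Finset.univ.filter (fun c : Fin t → B => φ α c = 0)).card
      = q ^ (t - b α) := by
    intro α
    have h1 : Fintype.card (LinearMap.ker (φ α)) = q ^ (t - b α) := by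
      rw [← hq, ← hker α]
      exact Module.card_eq_pow_finrank (K := B) (V := ↥(LinearMap.ker (φ α)))
    have h2 : (Finset.univ.filter (fun c : Fin t → B => φ α c = 0))
        = Finset.univ.filter (fun c => c ∈ LinearMap.ker (φ α)) := by
      ext c; simp [LinearMap.mem_ker]
    rw [h2, ← Fintype.card_subtype, h1]
  -- linear independence at αstar
  have hind : LinearIndependent B (fun i => (g i).eval αstar) := by
    rw [linearIndependent_iff_card_eq_finrank_span]
    simpa [Set.finrank] using hrank.symm
  -- the polynomial P c
  set P : (Fin t → B) → F[X] := fun c => ∑ i, C (algebraMap B F (c i)) * g i with hP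
  have hPeval : ∀ c α, (P c).eval α = φ α c := by
    intro c α
    show (∑ i, C (algebraMap B F (c i)) * g i).eval α = φ α c
    rw [hφapp, eval_finset_sum]
    refine Finset.sum_congr rfl fun i _ => ?_
    rw [eval_mul, eval_C, Algebra.smul_def]
  have hPdeg : ∀ c, (P c).natDegree ≤ r - 1 := by
    intro c
    rw [natDegree_le_iff_degree_le]
    refine (degree_sum_le _ _).trans (Finset.sup_le fun i _ => ?_)
    calc (C (algebraMap B F (c i)) * g i).degree
        ≤ (C (algebraMap B F (c i))).degree + (g i).degree := degree_mul_le _ _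
      _ ≤ 0 + ((r-1 : ℕ) : WithBot ℕ) := add_le_add degree_C_le (hdeg i)
      _ = ((r-1 : ℕ) : WithBot ℕ) := zero_add _
  have hPne : ∀ c : Fin t → B, c ≠ 0 → P c ≠ 0 := by
    intro c hc h0
    apply hc
    have : φ αstar c = 0 := by rw [← hPeval, h0, eval_zero]
    rw [hφapp] at this
    exact funext fun i => (Fintype.linearIndependent_iff.mp hind c this) i
  -- count of roots in A.erase αstar for c ≠ 0
  have hcnt : ∀ c : Fin t → B, c ≠ 0 →
      ((A.erase αstar).filter (fun α => φ α c = 0)).card ≤ r - 1 := by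
    intro c hc
    calc ((A.erase αstar).filter (fun α => φ α c = 0)).card
        ≤ (P c).roots.toFinset.card := by
          apply Finset.card_le_card
          intro α hα
          rw [Finset.mem_filter] at hα
          rw [Multiset.mem_toFinset, mem_roots']
          exact ⟨hPne c hc, by rw [IsRoot, hPeval]; exact hα.2⟩
      _ ≤ Multiset.card (P c).roots := (P c).roots.toFinset_card_le
      _ ≤ (P c).natDegree := (P c).card_roots'
      _ ≤ r - 1 := hPdeg c
  -- double counting (natural number version)
  have hn1 : 1 ≤ n := by rw [← hn]; exact Finset.card_pos.mpr ⟨αstar, hαstar⟩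
  have hqt1 : 1 ≤ q ^ t := Nat.one_le_pow _ _ hqpos
  have hNat : ∑ α ∈ A.erase αstar, q ^ (t - b α) ≤ (r - 1) * (q ^ t - 1) + (n - 1) := by
    have hsum : ∑ α ∈ A.erase αstar, q ^ (t - b α)
        = ∑ c : Fin t → B, ((A.erase αstar).filter (fun α => φ α c = 0)).card := by
      calc ∑ α ∈ A.erase αstar, q ^ (t - b α)
          = ∑ α ∈ A.erase αstar,
              (Finset.univ.filter (fun c : Fin t → B => φ α c = 0)).card :=
            Finset.sum_congr rfl fun α _ => (hScard α).symm
        _ = ∑ α ∈ A.erase αstar, ∑ c : Fin t → B, if φ α c = 0 then 1 else 0 :=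
            Finset.sum_congr rfl fun α _ => Finset.card_filter _ _
        _ = ∑ c : Fin t → B, ∑ α ∈ A.erase αstar, if φ α c = 0 then 1 else 0 :=
            Finset.sum_comm
        _ = ∑ c : Fin t → B, ((A.erase αstar).filter (fun α => φ α c = 0)).card :=
            Finset.sum_congr rfl fun c _ => (Finset.card_filter _ _).symm
    rw [hsum]
    have hsplit := Finset.add_sum_erase Finset.univ
      (fun c : Fin t → B => ((A.erase αstar).filter (fun α => φ α c = 0)).card)
      (Finset.mem_univ 0)
    rw [← hsplit]
    have h0 : ((A.erase αstar).filter (fun α => φ α (0 : Fin t → B) = 0)).card ≤ n - 1 := by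
      calc ((A.erase αstar).filter (fun α => φ α (0 : Fin t → B) = 0)).card
          ≤ (A.erase αstar).card := Finset.card_filter_le _ _
        _ = n - 1 := by rw [Finset.card_erase_of_mem hαstar, hn]
    have hrest : ∑ c ∈ Finset.univ.erase (0 : Fin t → B),
        ((A.erase αstar).filter (fun α => φ α c = 0)).card ≤ (q ^ t - 1) * (r - 1) := by
      have hcard : (Finset.univ.erase (0 : Fin t → B)).card = q ^ t - 1 := by
        rw [Finset.card_erase_of_mem (Finset.mem_univ 0), Finset.card_univ,
          Fintype.card_fun, hq, Fintype.card_fin]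
      calc ∑ c ∈ Finset.univ.erase (0 : Fin t → B),
            ((A.erase αstar).filter (fun α => φ α c = 0)).card
          ≤ ∑ _c ∈ Finset.univ.erase (0 : Fin t → B), (r - 1) :=
            Finset.sum_le_sum fun c hc => hcnt c (Finset.ne_of_mem_erase hc)
        _ = (q ^ t - 1) * (r - 1) := by rw [Finset.sum_const, hcard, smul_eq_mul]
    calc ((A.erase αstar).filter (fun α => φ α (0 : Fin t → B) = 0)).card
          + ∑ c ∈ Finset.univ.erase (0 : Fin t → B),
            ((A.erase αstar).filter (fun α => φ α c = 0)).card
        ≤ (n - 1) + (q ^ t - 1) * (r - 1) := Nat.add_le_add h0 hrest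
      _ = (r - 1) * (q ^ t - 1) + (n - 1) := by ring
  -- pass to the reals
  have hqR : (0:ℝ) < (q:ℝ) := by exact_mod_cast hqpos
  have hqtpos : (0:ℝ) < (q:ℝ) ^ t := pow_pos hqR t
  have hstep : ∑ α ∈ A.erase αstar, ((q : ℝ) ^ (b α))⁻¹
      = (∑ α ∈ A.erase αstar, (q:ℝ) ^ (t - b α)) / (q:ℝ) ^ t := by
    rw [Finset.sum_div]
    refine Finset.sum_congr rfl fun α _ => ?_
    have hbne : (q:ℝ) ^ (b α) ≠ 0 := (pow_pos hqR _).ne'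
    rw [eq_div_iff hqtpos.ne', pow_sub₀ _ hqR.ne' (hble α), mul_comm]
  rw [hstep]
  have hnum : (∑ α ∈ A.erase αstar, (q:ℝ) ^ (t - b α))
      ≤ ((r:ℝ) - 1) * ((q:ℝ) ^ t - 1) + ((n:ℝ) - 1) := by
    have h := (Nat.cast_le (α := ℝ)).mpr hNat
    push_cast [Nat.cast_sub hr, Nat.cast_sub hn1, Nat.cast_sub hqt1] at h
    convert h using 2
  gcongr
end

section
/- Let q ≥ 2 and t ≥ 1 be integers, n ≥ 2 an integer, and L a real number with 0 < L ≤ n−1. Let b_AVE = log_q((n−1)/L), and assume b_AVE ≤ t. Define ℓ = n−1 if b_AVE is an integer, and ℓ = ⌊(L − (n−1)q^{−⌈b_AVE⌉})/(q^{−⌊b_AVE⌋} − q^{−⌈b_AVE⌉})⌋ otherwise. Then every tuple (b_1,…,b_{n−1}) of integers with 0 ≤ b_i ≤ t for all i and Σ_{i=1}^{n−1} q^{−b_i} ≤ L satisfies Σ_{i=1}^{n−1} b_i ≥ ℓ·⌊b_AVE⌋ + (n−1−ℓ)·⌈b_AVE⌉. -/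
lemma aux1 (q : ℝ) (hq : 2 ≤ q) (d : ℤ) : 1 + d * (q - 1) ≤ q ^ d := by
  have hq0 : (0:ℝ) < q := by linarith
  obtain ⟨k, rfl | rfl⟩ := d.eq_nat_or_neg
  · have h := one_add_mul_le_pow (a := q - 1) (by linarith) k
    have e : (1:ℝ) + (q - 1) = q := by ring
    rw [e] at h
    rw [zpow_natCast]
    push_cast
    linarith
  · have h1 : (0:ℝ) < q ^ (-(k:ℤ)) := zpow_pos hq0 _
    rcases Nat.eq_zero_or_pos k with rfl | hk
    · simp
    · have hk1 : (1:ℝ) ≤ (k:ℝ) := by exact_mod_cast hk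
      push_cast
      nlinarith

lemma aux2 (q : ℝ) (hq : 2 ≤ q) (c : ℤ) (b : ℕ) :
    q ^ (-c) + ((c:ℝ) - (b:ℝ)) * (q ^ (1 - c) - q ^ (-c)) ≤ (q ^ b)⁻¹ := by
  have hq0 : (0:ℝ) < q := by linarith
  have h1 : q ^ (1 - c) = q ^ (-c) * q := by
    rw [show (1 - c : ℤ) = -c + 1 by ring, zpow_add₀ (ne_of_gt hq0), zpow_one]
  have h2 : (q ^ b)⁻¹ = q ^ (-c) * q ^ (c - (b:ℤ)) := by
    rw [← zpow_natCast q b, ← zpow_neg,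
      show (-(b:ℤ) : ℤ) = -c + (c - (b:ℤ)) by ring, zpow_add₀ (ne_of_gt hq0)]
  have h3 := aux1 q hq (c - b)
  have h4 : (0:ℝ) < q ^ (-c) := zpow_pos hq0 _
  have hcb : ((c - (b:ℤ) : ℤ) : ℝ) = (c:ℝ) - b := by push_cast; ring
  rw [h1, h2]
  calc q^(-c) + ((c:ℝ)-b) * (q^(-c)*q - q^(-c))
      = q^(-c) * (1 + ((c - (b:ℤ) : ℤ):ℝ) * (q-1)) := by rw [hcb]; ring
    _ ≤ q^(-c) * q^(c - (b:ℤ)) := mul_le_mul_of_nonneg_left h3 (le_of_lt h4)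

/-- the integral optimization step in the proof of Proposition 1.
Let `q ≥ 2`, `t ≥ 1`, `n ≥ 2`, `0 < L ≤ n - 1`, `b_AVE = log_q((n-1)/L) ≤ t`, and let
`ℓ = n - 1` if `b_AVE ∈ ℤ` and
`ℓ = ⌊(L - (n-1) q^{-⌈b_AVE⌉}) / (q^{-⌊b_AVE⌋} - q^{-⌈b_AVE⌉})⌋` otherwise.
Then every integer tuple `(b₁, …, b_{n-1})` with `0 ≤ bᵢ ≤ t` and `Σᵢ q^{-bᵢ} ≤ L`
satisfies `Σᵢ bᵢ ≥ ℓ ⌊b_AVE⌋ + (n - 1 - ℓ) ⌈b_AVE⌉`. -/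
theorem integral_lower_bound
    (q t n : ℕ) (hq : 2 ≤ q) (ht : 1 ≤ t) (hn : 2 ≤ n)
    (L : ℝ) (hL0 : 0 < L) (hL1 : L ≤ (n : ℝ) - 1)
    (bAVE : ℝ) (hbAVE : bAVE = Real.logb q (((n : ℝ) - 1) / L))
    (hbAVEt : bAVE ≤ (t : ℝ))
    (ℓ : ℤ)
    (hℓ_int : (∃ m : ℤ, bAVE = (m : ℝ)) → ℓ = (n : ℤ) - 1)
    (hℓ_nonint : (¬ ∃ m : ℤ, bAVE = (m : ℝ)) →
      ℓ = ⌊(L - ((n : ℝ) - 1) * (q : ℝ) ^ (-(⌈bAVE⌉ : ℤ)))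
            / ((q : ℝ) ^ (-(⌊bAVE⌋ : ℤ)) - (q : ℝ) ^ (-(⌈bAVE⌉ : ℤ)))⌋)
    (b : Fin (n - 1) → ℕ) (hb : ∀ i, b i ≤ t)
    (hsum : ∑ i, ((q : ℝ) ^ (b i))⁻¹ ≤ L) :
    ℓ * ⌊bAVE⌋ + ((n : ℤ) - 1 - ℓ) * ⌈bAVE⌉ ≤ ∑ i, (b i : ℤ) := by
  have hqR : (2:ℝ) ≤ (q:ℝ) := by exact_mod_cast hq
  have hq0 : (0:ℝ) < q := by linarith
  have hN : ((n - 1 : ℕ) : ℝ) = (n:ℝ) - 1 := by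
    have h1 : (1:ℕ) ≤ n := by omega
    push_cast [Nat.cast_sub h1]
    ring
  -- core inequality for any integer c
  have core : ∀ c : ℤ,
      (((n:ℝ)-1) * c - ∑ i, ((b i : ℝ))) * ((q:ℝ) ^ (1 - c) - (q:ℝ) ^ (-c))
        ≤ L - ((n:ℝ)-1) * (q:ℝ) ^ (-c) := by
    intro c
    have hpt : ∀ i ∈ (Finset.univ : Finset (Fin (n-1))),
        (q:ℝ) ^ (-c) + ((c:ℝ) - (b i : ℝ)) * ((q:ℝ) ^ (1-c) - (q:ℝ) ^ (-c))
          ≤ ((q:ℝ) ^ (b i))⁻¹ := fun i _ => aux2 (q:ℝ) hqR c (b i)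
    have hsum2 := le_trans (Finset.sum_le_sum hpt) hsum
    have hexp : ∑ i : Fin (n-1),
        ((q:ℝ) ^ (-c) + ((c:ℝ) - (b i : ℝ)) * ((q:ℝ) ^ (1-c) - (q:ℝ) ^ (-c)))
        = ((n:ℝ)-1) * (q:ℝ)^(-c)
          + (((n:ℝ)-1) * c - ∑ i, ((b i : ℝ))) * ((q:ℝ)^(1-c) - (q:ℝ)^(-c)) := by
      rw [Finset.sum_add_distrib, Finset.sum_const, nsmul_eq_mul]
      rw [← Finset.sum_mul, Finset.sum_sub_distrib, Finset.sum_const, nsmul_eq_mul]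
      rw [Finset.card_univ, Fintype.card_fin, hN]
    rw [hexp] at hsum2
    linarith
  by_cases hI : (∃ m : ℤ, bAVE = (m : ℝ))
  · -- integer case
    obtain ⟨B, hB⟩ := hI
    have hℓ := hℓ_int ⟨B, hB⟩
    have hn1 : (0:ℝ) < (n:ℝ) - 1 := by
      have : (2:ℝ) ≤ (n:ℝ) := by exact_mod_cast hn
      linarith
    have hx : (0:ℝ) < ((n:ℝ)-1)/L := div_pos hn1 hL0
    have hq1 : (q:ℝ) ≠ 1 := by linarith
    have hpow : (q:ℝ) ^ (B:ℝ) = ((n:ℝ)-1)/L := by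
      have hlog : Real.logb q (((n:ℝ)-1)/L) = (B:ℝ) := by rw [← hbAVE, hB]
      rw [← hlog]
      exact Real.rpow_logb hq0 hq1 hx
    have hpow' : (q:ℝ) ^ (B:ℤ) = ((n:ℝ)-1)/L := by
      rw [← Real.rpow_intCast]; exact_mod_cast hpow
    have hpB : (0:ℝ) < (q:ℝ) ^ (B:ℤ) := zpow_pos hq0 _
    have hne : (q:ℝ) ^ (B:ℤ) ≠ 0 := ne_of_gt hpB
    have hmul : ((n:ℝ)-1) = (q:ℝ)^(B:ℤ) * L := by
      field_simp at hpow'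
      linarith
    have hLeq : L = ((n:ℝ)-1) * (q:ℝ) ^ (-B) := by
      rw [hmul, zpow_neg, mul_comm ((q:ℝ)^(B:ℤ)) L, mul_assoc,
        mul_inv_cancel₀ hne, mul_one]
    have hc := core (B + 1)
    have e1 : (1 : ℤ) - (B + 1) = -B := by ring
    have e2 : (q:ℝ) ^ (-(B+1)) = (q:ℝ)^(-B) * (q:ℝ)⁻¹ := by
      rw [show (-(B+1) : ℤ) = -B + (-1) by ring, zpow_add₀ (ne_of_gt hq0), zpow_neg_one]
    rw [e1, e2] at hc
    have hpnB : (0:ℝ) < (q:ℝ) ^ (-B) := zpow_pos hq0 _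
    have hD : (0:ℝ) < (q:ℝ)^(-B) - (q:ℝ)^(-B) * (q:ℝ)⁻¹ := by
      have hqi : (q:ℝ)⁻¹ < 1 := by
        rw [inv_lt_one_iff₀]; right; linarith
      nlinarith
    have hS : ((n:ℝ)-1) * B ≤ ∑ i, ((b i : ℝ)) := by
      rw [hLeq] at hc
      push_cast at hc
      have h5 : (((n:ℝ)-1) * B - ∑ i, ((b i : ℝ)))
          * ((q:ℝ)^(-B) - (q:ℝ)^(-B) * (q:ℝ)⁻¹)
          ≤ 0 * ((q:ℝ)^(-B) - (q:ℝ)^(-B) * (q:ℝ)⁻¹) := by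
        rw [zero_mul]
        nlinarith [hc]
      have h6 := le_of_mul_le_mul_right h5 hD
      linarith
    rw [hℓ, hB, Int.floor_intCast, Int.ceil_intCast]
    have hgoal : (((((n:ℤ)-1) * B + ((n:ℤ) - 1 - ((n:ℤ)-1)) * B : ℤ)) : ℝ)
        ≤ ((∑ i, (b i : ℤ) : ℤ) : ℝ) := by
      push_cast
      have : ∑ i, ((b i : ℤ) : ℝ) = ∑ i, ((b i : ℕ) : ℝ) := by push_cast; rfl
      nlinarith [hS, this]
    exact_mod_cast hgoal
  · -- non-integer case
    have hℓ := hℓ_nonint hI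
    set c : ℤ := ⌈bAVE⌉ with hc
    have hfc : ⌊bAVE⌋ = c - 1 := by
      have h1 : ⌈bAVE⌉ ≤ ⌊bAVE⌋ + 1 := Int.ceil_le_floor_add_one bAVE
      have h2 : ⌊bAVE⌋ < ⌈bAVE⌉ := by
        rcases lt_or_ge ⌊bAVE⌋ ⌈bAVE⌉ with h | h
        · exact h
        · exfalso
          apply hI
          refine ⟨⌊bAVE⌋, le_antisymm ?_ (Int.floor_le bAVE)⟩
          calc bAVE ≤ (⌈bAVE⌉ : ℝ) := Int.le_ceil bAVE
            _ ≤ (⌊bAVE⌋ : ℝ) := by exact_mod_cast h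
      omega
    have e1 : (1:ℤ) - c = -(c - 1) := by ring
    have hcore := core c
    rw [e1] at hcore
    have hD : (0:ℝ) < (q:ℝ)^(-(c-1)) - (q:ℝ)^(-c) := by
      have e2 : (q:ℝ)^(-(c-1)) = (q:ℝ)^(-c) * (q:ℝ) := by
        rw [show (-(c-1) : ℤ) = -c + 1 by ring, zpow_add₀ (ne_of_gt hq0), zpow_one]
      have hp : (0:ℝ) < (q:ℝ)^(-c) := zpow_pos hq0 _
      rw [e2]; nlinarith
    have key : (((n:ℤ)-1) * c - ∑ i, (b i : ℤ)) ≤ ℓ := by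
      rw [hℓ, hfc]
      apply Int.le_floor.mpr
      rw [le_div_iff₀ hD]
      push_cast
      convert hcore using 2 <;> push_cast <;> ring
    rw [hfc]
    have hg : ℓ * (c - 1) + ((n:ℤ) - 1 - ℓ) * c = ((n:ℤ)-1) * c - ℓ := by ring
    rw [hg]
    omega
end

section
/- Let A ⊆ F with |A| = n ≥ 2, let α* ∈ A, and let 1 ≤ r ≤ n be an integer. Suppose g_1,…,g_t ∈ F[x] are polynomials of degree at most r−1 with rank_q{g_1(α*),…,g_t(α*)} = t. For each α ∈ A∖{α*} let b_α = rank_q{g_1(α),…,g_t(α)}. Set L = ((r−1)(q^t−1)+(n−1))/q^t, b_AVE = log_q((n−1)/L), and let ℓ = n−1 if b_AVE is an integer, and ℓ = ⌊(L − (n−1)q^{−⌈b_AVE⌉})/(q^{−⌊b_AVE⌋} − q^{−⌈b_AVE⌉})⌋ otherwise. Then Σ_{α ∈ A∖{α*}} b_α ≥ ℓ·⌊b_AVE⌋ + (n−1−ℓ)·⌈b_AVE⌉. -/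
open Polynomial
open scoped Classical

private lemma bern_int (Q : ℝ) (hQ : 2 ≤ Q) (e : ℤ) : 1 + (e : ℝ) * (Q - 1) ≤ Q ^ e := by
  rcases le_or_gt 0 e with he | he
  · lift e to ℕ using he
    have h := one_add_mul_le_pow (a := Q - 1) (by linarith) e
    have h2 : (1 : ℝ) + (Q - 1) = Q := by ring
    rw [h2] at h
    simpa [zpow_natCast] using h
  · have h1 : (e : ℝ) ≤ -1 := by exact_mod_cast (by omega : e ≤ -1)
    have h2 : (0:ℝ) < Q ^ e := zpow_pos (by linarith) e
    nlinarith

private lemma chord_le (Q : ℝ) (hQ : 2 ≤ Q) (f bb : ℤ) :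
    Q ^ (-(f+1)) + ((f:ℝ) + 1 - (bb:ℝ)) * (Q ^ (-f) - Q ^ (-(f+1))) ≤ Q ^ (-bb) := by
  have hQ0 : (0:ℝ) < Q := by linarith
  have hx : (0:ℝ) < Q ^ (-(f+1)) := zpow_pos hQ0 _
  have key := bern_int Q hQ (f + 1 - bb)
  have h1 : Q ^ (-bb) = Q ^ (-(f+1)) * Q ^ (f+1-bb) := by
    rw [← zpow_add₀ (ne_of_gt hQ0)]; ring_nf
  have h2 : Q ^ (-f) = Q ^ (-(f+1)) * Q := by
    rw [show -f = -(f+1)+1 by ring, zpow_add_one₀ (ne_of_gt hQ0)]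
  have h3 := mul_le_mul_of_nonneg_left key hx.le
  push_cast at h3
  rw [h1, h2]
  nlinarith [h3]

private lemma chord_sum {ι : Type*} (s : Finset ι) (bv : ι → ℕ) (Q : ℝ) (hQ : 2 ≤ Q)
    (f : ℤ) (L : ℝ) (h : ∑ α ∈ s, Q ^ (-(bv α : ℤ)) ≤ L) :
    ((s.card : ℝ) * ((f : ℝ) + 1) - ∑ α ∈ s, (bv α : ℝ)) * (Q ^ (-f) - Q ^ (-(f+1)))
      ≤ L - (s.card : ℝ) * Q ^ (-(f+1)) := by
  have key : ∀ α ∈ s,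
      Q ^ (-(f+1)) + ((f:ℝ) + 1 - (bv α : ℝ)) * (Q ^ (-f) - Q ^ (-(f+1)))
        ≤ Q ^ (-(bv α : ℤ)) := fun α _ => by
    simpa using chord_le Q hQ f (bv α)
  have hsum := (Finset.sum_le_sum key).trans h
  rw [Finset.sum_add_distrib, Finset.sum_const, ← Finset.sum_mul] at hsum
  have h2 : ∑ α ∈ s, ((f:ℝ) + 1 - (bv α:ℝ))
      = (s.card : ℝ) * ((f:ℝ)+1) - ∑ α ∈ s, (bv α:ℝ) := by
    rw [Finset.sum_sub_distrib, Finset.sum_const, nsmul_eq_mul]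
  rw [h2, nsmul_eq_mul] at hsum
  linarith

private lemma counting_bound
    (q t r : ℕ) (B F : Type*) [Field B] [Fintype B] [Field F] [Fintype F] [Algebra B F]
    (hq : Fintype.card B = q)
    (A' : Finset F) (αstar : F)
    (g : Fin t → F[X])
    (hdeg : ∀ i, (g i).degree ≤ ((r - 1 : ℕ) : WithBot ℕ))
    (hrank : Module.finrank B
      (Submodule.span B (Set.range fun i => (g i).eval αstar)) = t)
    (b : F → ℕ)
    (hb : ∀ α, b α = Module.finrank B
      (Submodule.span B (Set.range fun i => (g i).eval α))) :
    ∑ α ∈ A', q ^ (t - b α) ≤ (q ^ t - 1) * (r - 1) + A'.card := by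
  classical
  have hli : LinearIndependent B (fun i => (g i).eval αstar) := by
    rw [linearIndependent_iff_card_eq_finrank_span]
    simp only [Set.finrank]
    rw [hrank, Fintype.card_fin]
  have hcard : ∀ α : F,
      (Finset.univ.filter fun β : Fin t → B => (∑ i, β i • (g i).eval α) = 0).card
        = q ^ (t - b α) := by
    intro α
    have happ : ∀ β : Fin t → B,
        Fintype.linearCombination B (fun i => (g i).eval α) β = ∑ i, β i • (g i).eval α :=
      fun β => rfl
    set φ : (Fin t → B) →ₗ[B] F :=
      Fintype.linearCombination B (fun i => (g i).eval α) with hφ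
    have h1 : Fintype.card (LinearMap.ker φ)
        = (Finset.univ.filter fun β : Fin t → B => (∑ i, β i • (g i).eval α) = 0).card := by
      rw [Fintype.card_subtype]
      congr 1
    have h2 : Fintype.card (LinearMap.ker φ) = q ^ Module.finrank B (LinearMap.ker φ) := by
      rw [← hq]; exact Module.card_eq_pow_finrank
    have hrange : Module.finrank B (LinearMap.range φ) = b α := by
      rw [hφ, Fintype.range_linearCombination, hb]
    have hdom : Module.finrank B (Fin t → B) = t := by
      simp [Module.finrank_fintype_fun_eq_card]
    have hrn := LinearMap.finrank_range_add_finrank_ker φ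
    rw [hdom, hrange] at hrn
    have hker : Module.finrank B (LinearMap.ker φ) = t - b α := Nat.eq_sub_of_add_eq' hrn
    rw [← h1, h2, hker]
  have hsum : ∑ α ∈ A', q ^ (t - b α)
      = ∑ β : Fin t → B, (A'.filter fun α => (∑ i, β i • (g i).eval α) = 0).card := by
    simp_rw [← hcard, Finset.card_filter]
    rw [Finset.sum_comm]
  have hβ : ∀ β : Fin t → B, β ≠ 0 →
      (A'.filter fun α => (∑ i, β i • (g i).eval α) = 0).card ≤ r - 1 := by
    intro β hβ0
    set P : F[X] := ∑ i, Polynomial.C (algebraMap B F (β i)) * g i with hP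
    have hPeval : ∀ α, P.eval α = ∑ i, β i • (g i).eval α := by
      intro α
      rw [hP, eval_finset_sum]
      refine Finset.sum_congr rfl fun i _ => ?_
      rw [eval_mul, eval_C, Algebra.smul_def]
    have hPne : P ≠ 0 := by
      intro h
      apply hβ0
      funext i
      refine Fintype.linearIndependent_iff.mp hli β ?_ i
      rw [← hPeval αstar, h, eval_zero]
    have hPdeg : P.natDegree ≤ r - 1 := by
      apply natDegree_le_iff_degree_le.mpr
      refine (Polynomial.degree_sum_le _ _).trans ?_
      apply Finset.sup_le
      intro i _
      calc (Polynomial.C (algebraMap B F (β i)) * g i).degree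
          ≤ (Polynomial.C (algebraMap B F (β i))).degree + (g i).degree :=
            degree_mul_le _ _
        _ ≤ 0 + ((r-1:ℕ) : WithBot ℕ) := add_le_add degree_C_le (hdeg i)
        _ = ((r-1:ℕ) : WithBot ℕ) := zero_add _
    have hsub : (A'.filter fun α => (∑ i, β i • (g i).eval α) = 0) ⊆ P.roots.toFinset := by
      intro α hα
      rw [Multiset.mem_toFinset, mem_roots hPne]
      rw [Finset.mem_filter] at hα
      exact (hPeval α).trans hα.2
    calc (A'.filter fun α => (∑ i, β i • (g i).eval α) = 0).card
        ≤ P.roots.toFinset.card := Finset.card_le_card hsub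
      _ ≤ Multiset.card P.roots := P.roots.toFinset_card_le
      _ ≤ P.natDegree := P.card_roots'
      _ ≤ r - 1 := hPdeg
  rw [hsum, ← Finset.add_sum_erase _ _ (Finset.mem_univ (0 : Fin t → B))]
  have hzero : (A'.filter fun α => (∑ i, (0 : Fin t → B) i • (g i).eval α) = 0).card
      = A'.card := by
    congr 1
    rw [Finset.filter_true_of_mem]
    intro α _
    simp
  have hbound : ∑ β ∈ Finset.univ.erase (0 : Fin t → B),
      (A'.filter fun α => (∑ i, β i • (g i).eval α) = 0).card
        ≤ (q ^ t - 1) * (r - 1) := by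
    calc ∑ β ∈ Finset.univ.erase (0 : Fin t → B),
        (A'.filter fun α => (∑ i, β i • (g i).eval α) = 0).card
        ≤ ∑ _β ∈ Finset.univ.erase (0 : Fin t → B), (r - 1) :=
          Finset.sum_le_sum fun β hβm => hβ β (Finset.ne_of_mem_erase hβm)
      _ = (Finset.univ.erase (0 : Fin t → B)).card * (r - 1) := by
          rw [Finset.sum_const, smul_eq_mul]
      _ = (q ^ t - 1) * (r - 1) := by
          rw [Finset.card_erase_of_mem (Finset.mem_univ _), Finset.card_univ,
            Fintype.card_fun, hq, Fintype.card_fin]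
  rw [hzero, add_comm]
  exact Nat.add_le_add_right hbound _

/-- Proposition 1: the lower bound on the repair bandwidth of any linear
repair scheme over `B = GF(q)` for a Reed–Solomon code `RS(A, k)` with `r = n - k` parities.
With `L = ((r-1)(q^t - 1) + (n-1))/q^t`, `b_AVE = log_q((n-1)/L)`, and `ℓ` defined as
`n - 1` if `b_AVE ∈ ℤ` and `⌊(L - (n-1) q^{-⌈b_AVE⌉}) / (q^{-⌊b_AVE⌋} - q^{-⌈b_AVE⌉})⌋`
otherwise, the bandwidth satisfies
`Σ_{α ∈ A \ {α*}} b_α ≥ ℓ ⌊b_AVE⌋ + (n - 1 - ℓ) ⌈b_AVE⌉`. -/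
theorem repair_bandwidth_lower_bound
    (q t r n : ℕ) (B F : Type*) [Field B] [Fintype B] [Field F] [Fintype F]
    [Algebra B F]
    (hq : Fintype.card B = q) (ht : Module.finrank B F = t)
    (A : Finset F) (hn : A.card = n) (hn2 : 2 ≤ n)
    (αstar : F) (hαstar : αstar ∈ A)
    (hr1 : 1 ≤ r) (hrn : r ≤ n)
    (g : Fin t → F[X])
    (hdeg : ∀ i, (g i).degree ≤ ((r - 1 : ℕ) : WithBot ℕ))
    (hrank : Module.finrank B
      (Submodule.span B (Set.range fun i => (g i).eval αstar)) = t)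
    (b : F → ℕ)
    (hb : ∀ α : F, b α = Module.finrank B
      (Submodule.span B (Set.range fun i => (g i).eval α)))
    (L : ℝ)
    (hL : L = (((r : ℝ) - 1) * ((q : ℝ) ^ t - 1) + ((n : ℝ) - 1)) / (q : ℝ) ^ t)
    (bAVE : ℝ) (hbAVE : bAVE = Real.logb q (((n : ℝ) - 1) / L))
    (ℓ : ℤ)
    (hℓ_int : (∃ m : ℤ, bAVE = (m : ℝ)) → ℓ = (n : ℤ) - 1)
    (hℓ_nonint : (¬ ∃ m : ℤ, bAVE = (m : ℝ)) →
      ℓ = ⌊(L - ((n : ℝ) - 1) * (q : ℝ) ^ (-(⌈bAVE⌉ : ℤ)))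
            / ((q : ℝ) ^ (-(⌊bAVE⌋ : ℤ)) - (q : ℝ) ^ (-(⌈bAVE⌉ : ℤ)))⌋) :
    ℓ * ⌊bAVE⌋ + ((n : ℤ) - 1 - ℓ) * ⌈bAVE⌉ ≤ ∑ α ∈ A.erase αstar, (b α : ℤ) := by
  classical
  have hq2 : 2 ≤ q := by rw [← hq]; exact Fintype.one_lt_card
  have hQ2 : (2:ℝ) ≤ (q:ℝ) := by exact_mod_cast hq2
  have hQ0 : (0:ℝ) < (q:ℝ) := by linarith
  have hn1 : 1 ≤ n := le_trans (by norm_num) hn2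
  have hA'card : (A.erase αstar).card = n - 1 := by
    rw [Finset.card_erase_of_mem hαstar, hn]
  have hNcast : ((A.erase αstar).card : ℝ) = (n:ℝ) - 1 := by
    rw [hA'card, Nat.cast_sub hn1, Nat.cast_one]
  have hNR : (1:ℝ) ≤ (n:ℝ) - 1 := by
    have h2n : (2:ℝ) ≤ (n:ℝ) := by exact_mod_cast hn2
    linarith
  have hbt : ∀ α : F, b α ≤ t := by
    intro α
    rw [hb]
    have h := finrank_range_le_card (R := B) (fun i => (g i).eval α)
    simpa [Set.finrank] using h
  have hcount := counting_bound q t r B F hq (A.erase αstar) αstar g hdeg hrank b hb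
  rw [hA'card] at hcount
  have hqtpos : (0:ℝ) < (q:ℝ) ^ t := by positivity
  -- real version: ∑ q^{-b} ≤ L
  have hsumreal : ∑ α ∈ A.erase αstar, (q:ℝ) ^ (-(b α : ℤ)) ≤ L := by
    have hcastsum : ∀ α ∈ A.erase αstar, ((q ^ (t - b α) : ℕ) : ℝ)
        = (q:ℝ) ^ t * (q:ℝ) ^ (-(b α : ℤ)) := by
      intro α _
      have h1 : ((t - b α : ℕ) : ℤ) = (t:ℤ) - (b α : ℤ) := by
        have := hbt α; omega
      rw [Nat.cast_pow, ← zpow_natCast (q:ℝ) (t - b α), h1, sub_eq_add_neg,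
        zpow_add₀ (ne_of_gt hQ0), zpow_natCast]
    have hq1 : 1 ≤ q ^ t := Nat.one_le_pow t q (by omega)
    have h := (Nat.cast_le (α := ℝ)).mpr hcount
    rw [Nat.cast_sum] at h
    rw [Finset.sum_congr rfl hcastsum, ← Finset.mul_sum] at h
    rw [Nat.cast_add, Nat.cast_mul, Nat.cast_sub hq1, Nat.cast_sub hr1,
      Nat.cast_sub hn1, Nat.cast_pow, Nat.cast_one] at h
    rw [hL, le_div_iff₀ hqtpos]
    nlinarith [h]
  have hdgen : ∀ m : ℤ, (0:ℝ) < (q:ℝ)^(-m) - (q:ℝ)^(-(m+1)) := by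
    intro m
    have he : (q:ℝ)^(-m) = (q:ℝ)^(-(m+1)) * q := by
      rw [show -m = -(m+1)+1 by ring, zpow_add_one₀ (ne_of_gt hQ0)]
    have hp := zpow_pos hQ0 (-(m+1)) (G₀ := ℝ)
    nlinarith
  have hSZcast : ((∑ α ∈ A.erase αstar, (b α : ℤ) : ℤ) : ℝ)
      = ∑ α ∈ A.erase αstar, (b α : ℝ) := by
    push_cast
    rfl
  by_cases hint : ∃ m : ℤ, bAVE = (m : ℝ)
  · obtain ⟨m, hm⟩ := hint
    have hℓv := hℓ_int ⟨m, hm⟩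
    have hr1' : (1:ℝ) ≤ (r:ℝ) := by exact_mod_cast hr1
    have hqt1 : (1:ℝ) ≤ (q:ℝ) ^ t := one_le_pow₀ (by linarith)
    have hLpos : (0:ℝ) < L := by
      rw [hL]
      apply div_pos _ hqtpos
      have hmn := mul_nonneg (by linarith : (0:ℝ) ≤ (r:ℝ)-1) (by linarith : (0:ℝ) ≤ (q:ℝ)^t-1)
      linarith
    have hrpow := Real.rpow_logb hQ0 (ne_of_gt (show (1:ℝ) < (q:ℝ) by linarith))
      (div_pos (show (0:ℝ) < (n:ℝ)-1 by linarith) hLpos)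
    rw [← hbAVE, hm, Real.rpow_intCast] at hrpow
    have hqm : (0:ℝ) < (q:ℝ)^m := zpow_pos hQ0 m
    have hLval : L = ((n:ℝ)-1) * (q:ℝ)^(-m) := by
      rw [zpow_neg, eq_comm, mul_inv_eq_iff_eq_mul₀ (ne_of_gt hqm), eq_comm]
      rw [eq_div_iff (ne_of_gt hLpos)] at hrpow
      linarith [hrpow]
    have hkey := chord_sum (A.erase αstar) b (q:ℝ) hQ2 m L hsumreal
    rw [hNcast] at hkey
    have hd := hdgen m
    have hrhs : ((n:ℝ)-1) * ((q:ℝ)^(-m) - (q:ℝ)^(-(m+1)))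
        = L - ((n:ℝ)-1) * (q:ℝ)^(-(m+1)) := by
      rw [hLval]; ring
    have hkey2 : (((n:ℝ)-1) * ((m:ℝ)+1) - ∑ α ∈ A.erase αstar, (b α : ℝ)) ≤ ((n:ℝ)-1) := by
      apply le_of_mul_le_mul_right _ hd
      linarith [hkey, hrhs]
    have hfin : ((n:ℝ)-1) * (m:ℝ) ≤ ∑ α ∈ A.erase αstar, (b α : ℝ) := by linarith [hkey2]
    rw [hℓv, hm]
    simp only [Int.floor_intCast, Int.ceil_intCast]
    have hgoal : ((n:ℤ)-1) * m + ((n:ℤ)-1-((n:ℤ)-1)) * m = ((n:ℤ)-1) * m := by ring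
    rw [hgoal]
    have : (((((n:ℤ)-1) * m : ℤ)) : ℝ) ≤ ((∑ α ∈ A.erase αstar, (b α : ℤ) : ℤ) : ℝ) := by
      rw [hSZcast]
      push_cast
      linarith [hfin]
    exact_mod_cast this
  · have hℓv := hℓ_nonint hint
    have hceil : ⌈bAVE⌉ = ⌊bAVE⌋ + 1 := by
      have h1 := Int.ceil_le_floor_add_one bAVE
      have h3 := Int.floor_le_ceil bAVE
      rcases eq_or_lt_of_le h3 with heq | hlt
      · exfalso
        apply hint
        refine ⟨⌊bAVE⌋, le_antisymm ?_ (Int.floor_le bAVE)⟩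
        have hu := Int.le_ceil bAVE
        rw [← heq] at hu
        exact hu
      · omega
    have hkey := chord_sum (A.erase αstar) b (q:ℝ) hQ2 ⌊bAVE⌋ L hsumreal
    rw [hNcast] at hkey
    have hd := hdgen ⌊bAVE⌋
    have hle : (((n:ℤ)-1) * (⌊bAVE⌋+1) - ∑ α ∈ A.erase αstar, (b α : ℤ)) ≤ ℓ := by
      rw [hℓv, hceil]
      apply Int.le_floor.mpr
      rw [le_div_iff₀ hd]
      push_cast
      push_cast at hkey
      linarith [hkey]
    rw [hceil]
    have hring : ℓ * ⌊bAVE⌋ + ((n:ℤ)-1-ℓ) * (⌊bAVE⌋+1)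
        = ((n:ℤ)-1) * (⌊bAVE⌋+1) - ℓ := by ring
    rw [hring]
    omega
end

section
/- Let 1 ≤ s ≤ t, let α* ∈ F, and suppose g_1,…,g_t ∈ F[x] are polynomials of degree at most q^s − 1 with rank_q{g_1(α*),…,g_t(α*)} = t. Then Σ_{α ∈ F∖{α*}} rank_q{g_1(α),…,g_t(α)} ≥ (q^t − 1)(t − s). -/
open Polynomial
open scoped Classical

private lemma aux_lb (e d : ℕ) : d * e + 1 ≤ (e + 1) ^ d := by
  induction d with
  | zero => simp
  | succ d ih =>
    have h1 : 1 ≤ (e + 1) ^ d := Nat.one_le_pow _ _ (by omega)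
    rw [pow_succ]
    nlinarith

private lemma aux_ub (e d : ℕ) : (e + 1) ^ (d + 1) ≤ (d + 1) * e * (e + 1) ^ d + 1 := by
  induction d with
  | zero => simp
  | succ d ih =>
    calc (e + 1) ^ (d + 1 + 1) = (e + 1) ^ (d + 1) * (e + 1) := pow_succ _ _
      _ ≤ ((d + 1) * e * (e + 1) ^ d + 1) * (e + 1) := mul_le_mul_left ih _
      _ = (d + 1) * e * ((e + 1) ^ d * (e + 1)) + e + 1 := by ring
      _ = (d + 1) * e * (e + 1) ^ (d + 1) + e + 1 := by rw [← pow_succ]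
      _ ≤ (d + 1) * e * (e + 1) ^ (d + 1) + e * (e + 1) ^ (d + 1) + 1 := by
          have h2 : e ≤ e * (e + 1) ^ (d + 1) :=
            Nat.le_mul_of_pos_right e (by positivity)
          omega
      _ = (d + 1 + 1) * e * (e + 1) ^ (d + 1) + 1 := by ring

private lemma aux_point (q s m : ℕ) (hq : 2 ≤ q) (hs : 1 ≤ s) :
    (q : ℤ) ^ (s - 1) * ((q : ℤ) - 1) * ((m : ℤ) - (s : ℤ)) ≤ (q : ℤ) ^ m - (q : ℤ) ^ s := by
  have he : q - 1 + 1 = q := by omega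
  have hq1 : (1 : ℤ) ≤ (q : ℤ) := by exact_mod_cast (by omega : 1 ≤ q)
  rcases le_or_gt s m with hms | hms
  · have h1 : (m - s) * (q - 1) + 1 ≤ q ^ (m - s) := by
      have := aux_lb (q - 1) (m - s); rwa [he] at this
    have h2 : q ^ s * ((m - s) * (q - 1)) + q ^ s ≤ q ^ m := by
      calc q ^ s * ((m - s) * (q - 1)) + q ^ s
          = q ^ s * ((m - s) * (q - 1) + 1) := by ring
        _ ≤ q ^ s * q ^ (m - s) := Nat.mul_le_mul_left _ h1
        _ = q ^ m := by rw [← pow_add]; congr 1; omega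
    have h2' : ((q ^ s * ((m - s) * (q - 1)) + q ^ s : ℕ) : ℤ) ≤ ((q ^ m : ℕ) : ℤ) := by
      exact_mod_cast h2
    push_cast [Nat.cast_sub hms, Nat.cast_sub (show 1 ≤ q by omega)] at h2'
    have h3 : (q : ℤ) ^ (s - 1) ≤ (q : ℤ) ^ s := pow_le_pow_right₀ hq1 (by omega)
    have h4 : (0 : ℤ) ≤ ((q : ℤ) - 1) * ((m : ℤ) - s) := by
      apply mul_nonneg
      · linarith
      · have : (s : ℤ) ≤ (m : ℤ) := by exact_mod_cast hms
        linarith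
    nlinarith [mul_le_mul_of_nonneg_right h3 h4]
  · have h1 : q ^ (s - m) ≤ (s - m) * (q - 1) * q ^ (s - m - 1) + 1 := by
      have := aux_ub (q - 1) (s - m - 1)
      rw [he] at this
      have hd : s - m - 1 + 1 = s - m := by omega
      rwa [hd] at this
    have h2 : q ^ s ≤ (s - m) * (q - 1) * q ^ (s - 1) + q ^ m := by
      calc q ^ s = q ^ m * q ^ (s - m) := by rw [← pow_add]; congr 1; omega
        _ ≤ q ^ m * ((s - m) * (q - 1) * q ^ (s - m - 1) + 1) := Nat.mul_le_mul_left _ h1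
        _ = (s - m) * (q - 1) * (q ^ m * q ^ (s - m - 1)) + q ^ m := by ring
        _ = (s - m) * (q - 1) * q ^ (s - 1) + q ^ m := by
            have hexp : m + (s - m - 1) = s - 1 := by omega
            rw [← pow_add, hexp]
    have h2' : ((q ^ s : ℕ) : ℤ) ≤ (((s - m) * (q - 1) * q ^ (s - 1) + q ^ m : ℕ) : ℤ) := by
      exact_mod_cast h2
    push_cast [Nat.cast_sub hms.le, Nat.cast_sub (show 1 ≤ q by omega)] at h2'
    nlinarith [h2']

/-- Corollary 1. Any linear repair scheme over `B = GF(q)` for a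
full-length (`n = q^t`) Reed–Solomon code with `r = q^s` parities requires a bandwidth
of at least `(q^t - 1)(t - s)` sub-symbols: if `g₁, …, g_t` have degree at most `q^s - 1`
and `rank_q {g₁(α*), …, g_t(α*)} = t`, then
`Σ_{α ∈ F \ {α*}} rank_q {g₁(α), …, g_t(α)} ≥ (q^t - 1)(t - s)`. -/
theorem full_length_lower_bound
    (q t s : ℕ) (B F : Type*) [Field B] [Fintype B] [Field F] [Fintype F]
    [Algebra B F]
    (hq : Fintype.card B = q) (ht : Module.finrank B F = t)
    (hs1 : 1 ≤ s) (hst : s ≤ t)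
    (αstar : F)
    (g : Fin t → F[X])
    (hdeg : ∀ i, (g i).degree ≤ ((q ^ s - 1 : ℕ) : WithBot ℕ))
    (hrank : Module.finrank B
      (Submodule.span B (Set.range fun i => (g i).eval αstar)) = t) :
    (q ^ t - 1) * (t - s)
      ≤ ∑ α ∈ Finset.univ.erase αstar,
          Module.finrank B (Submodule.span B (Set.range fun i => (g i).eval α)) := by
  classical
  have hq2 : 2 ≤ q := hq ▸ Fintype.one_lt_card
  have hcardF : Fintype.card F = q ^ t := by
    rw [← hq, ← ht]; exact Module.card_eq_pow_finrank
  set N : Finset F := Finset.univ.erase αstar with hN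
  have hcardN : N.card = q ^ t - 1 := by
    rw [hN, Finset.card_erase_of_mem (Finset.mem_univ _), Finset.card_univ, hcardF]
  set L : F → (Fin t → B) →ₗ[B] F :=
    fun α => Fintype.linearCombination B (fun i => (g i).eval α) with hLdef
  have hLapply : ∀ (α : F) (c : Fin t → B), L α c = ∑ i, c i • (g i).eval α := by
    intro α c
    rw [hLdef]
    exact Fintype.linearCombination_apply _ _ c
  have hrange : ∀ α : F, LinearMap.range (L α)
      = Submodule.span B (Set.range fun i => (g i).eval α) := by
    intro α
    rw [hLdef]
    apply Fintype.range_linearCombination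
  have hfinrank_pi : Module.finrank B (Fin t → B) = t := by
    simp [Module.finrank_pi]
  have hrn : ∀ α : F, Module.finrank B
        (Submodule.span B (Set.range fun i => (g i).eval α))
      + Module.finrank B (LinearMap.ker (L α)) = t := by
    intro α
    have h := LinearMap.finrank_range_add_finrank_ker (L α)
    rw [hrange α, hfinrank_pi] at h
    exact h
  have hker_card : ∀ α : F,
      (Finset.univ.filter fun c : Fin t → B => L α c = 0).card
        = q ^ Module.finrank B (LinearMap.ker (L α)) := by
    intro α
    rw [← hq, ← Module.card_eq_pow_finrank (K := B) (V := LinearMap.ker (L α))]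
    rw [← Fintype.card_subtype]
    apply Fintype.card_congr
    exact Equiv.subtypeEquivRight fun c => (LinearMap.mem_ker).symm
  -- linear independence of the values at αstar
  have hindep : LinearIndependent B (fun i => (g i).eval αstar) := by
    rw [linearIndependent_iff_card_eq_finrank_span]
    rw [Set.finrank, hrank, Fintype.card_fin]
  have hne : ∀ c : Fin t → B, c ≠ 0 → (∑ i, c i • g i) ≠ 0 := by
    intro c hc h0
    apply hc
    funext i
    refine Fintype.linearIndependent_iff.mp hindep c ?_ i
    have := congrArg (Polynomial.eval αstar) h0
    simpa [eval_finset_sum] using this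
  have hdegc : ∀ c : Fin t → B, (∑ i, c i • g i).natDegree ≤ q ^ s - 1 := by
    intro c
    apply Polynomial.natDegree_le_iff_degree_le.mpr
    refine (Polynomial.degree_sum_le _ _).trans ?_
    refine Finset.sup_le fun i _ => ?_
    refine le_trans ?_ (hdeg i)
    have hsm : c i • g i = (algebraMap B F (c i)) • g i :=
      (algebraMap_smul F (c i) (g i)).symm
    rw [hsm]
    exact Polynomial.degree_smul_le _ _
  have hroots : ∀ c : Fin t → B, c ≠ 0 →
      (N.filter fun α => L α c = 0).card ≤ q ^ s - 1 := by
    intro c hc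
    refine le_trans (Polynomial.card_le_degree_of_subset_roots
      (p := ∑ i, c i • g i) ?_) (hdegc c)
    intro α hα
    rw [Finset.mem_val, Finset.mem_filter] at hα
    rw [Polynomial.mem_roots']
    refine ⟨hne c hc, ?_⟩
    have : (∑ i, c i • g i).eval α = L α c := by
      rw [hLapply, eval_finset_sum]
      simp
    rw [Polynomial.IsRoot, this, hα.2]
  -- double counting
  have hcount : ∑ α ∈ N,
      ((Finset.univ.filter fun c : Fin t → B => c ≠ 0 ∧ L α c = 0).card)
      ≤ (q ^ t - 1) * (q ^ s - 1) := by
    have swap : ∀ α : F,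
        (Finset.univ.filter fun c : Fin t → B => c ≠ 0 ∧ L α c = 0).card
        = ∑ c ∈ Finset.univ.filter (fun c : Fin t → B => c ≠ 0),
            (if L α c = 0 then 1 else 0) := by
      intro α
      rw [← Finset.filter_filter, Finset.card_filter]
    have hcardnz : (Finset.univ.filter fun c : Fin t → B => c ≠ 0).card = q ^ t - 1 := by
      rw [Finset.filter_ne', Finset.card_erase_of_mem (Finset.mem_univ _),
        Finset.card_univ, Fintype.card_fun, hq, Fintype.card_fin]
    calc ∑ α ∈ N, ((Finset.univ.filter fun c : Fin t → B => c ≠ 0 ∧ L α c = 0).card)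
        = ∑ c ∈ Finset.univ.filter (fun c : Fin t → B => c ≠ 0),
            ∑ α ∈ N, (if L α c = 0 then 1 else 0) := by
          simp_rw [swap]; exact Finset.sum_comm
      _ = ∑ c ∈ Finset.univ.filter (fun c : Fin t → B => c ≠ 0),
            (N.filter fun α => L α c = 0).card := by
          refine Finset.sum_congr rfl fun c _ => ?_
          rw [Finset.card_filter]
      _ ≤ ∑ _c ∈ Finset.univ.filter (fun c : Fin t → B => c ≠ 0), (q ^ s - 1) :=
          Finset.sum_le_sum fun c hc => hroots c (Finset.mem_filter.mp hc).2
      _ = (q ^ t - 1) * (q ^ s - 1) := by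
          rw [Finset.sum_const, smul_eq_mul, hcardnz]
  have hkerfilter : ∀ α ∈ N,
      (Finset.univ.filter fun c : Fin t → B => c ≠ 0 ∧ L α c = 0).card + 1
        = q ^ Module.finrank B (LinearMap.ker (L α)) := by
    intro α _
    have h0 : (0 : Fin t → B) ∈ Finset.univ.filter fun c : Fin t → B => L α c = 0 := by
      simp
    have heq : (Finset.univ.filter fun c : Fin t → B => c ≠ 0 ∧ L α c = 0)
        = (Finset.univ.filter fun c : Fin t → B => L α c = 0).erase 0 := by
      ext c
      simp [Finset.mem_erase, and_comm]
    have hpos : 1 ≤ (Finset.univ.filter fun c : Fin t → B => L α c = 0).card :=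
      Finset.card_pos.mpr ⟨0, h0⟩
    rw [heq, Finset.card_erase_of_mem h0, hker_card α] at *
    omega
  set k : F → ℕ := fun α => Module.finrank B (LinearMap.ker (L α)) with hk
  have hsumpow : ∑ α ∈ N, q ^ k α ≤ N.card * q ^ s := by
    have h1 : ∑ α ∈ N, q ^ k α
        = (∑ α ∈ N, (Finset.univ.filter fun c : Fin t → B => c ≠ 0 ∧ L α c = 0).card)
          + N.card := by
      calc ∑ α ∈ N, q ^ k α
          = ∑ α ∈ N,
              ((Finset.univ.filter fun c : Fin t → B => c ≠ 0 ∧ L α c = 0).card + 1) :=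
            Finset.sum_congr rfl fun α hα => (hkerfilter α hα).symm
        _ = _ := by rw [Finset.sum_add_distrib, Finset.sum_const, smul_eq_mul, mul_one]
    rw [h1, hcardN]
    have hqs : 1 ≤ q ^ s := Nat.one_le_pow _ _ (by omega)
    calc (∑ α ∈ N, (Finset.univ.filter fun c : Fin t → B => c ≠ 0 ∧ L α c = 0).card)
          + (q ^ t - 1)
        ≤ (q ^ t - 1) * (q ^ s - 1) + (q ^ t - 1) := Nat.add_le_add_right hcount _
      _ = (q ^ t - 1) * (q ^ s - 1 + 1) := by ring
      _ = (q ^ t - 1) * q ^ s := by rw [Nat.sub_add_cancel hqs]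
  -- from the sum of powers bound to the bound on the sum of k's, via convexity
  have hZ : (∑ α ∈ N, (k α : ℤ)) ≤ (N.card : ℤ) * s := by
    set K : ℤ := (q : ℤ) ^ (s - 1) * ((q : ℤ) - 1) with hK
    have hKpos : 0 < K := by
      rw [hK]
      apply mul_pos
      · positivity
      · have : (2 : ℤ) ≤ (q : ℤ) := by exact_mod_cast hq2
        linarith
    have hpt : ∀ α ∈ N, K * ((k α : ℤ) - s) ≤ (q : ℤ) ^ k α - (q : ℤ) ^ s :=
      fun α _ => aux_point q s (k α) hq2 hs1
    have h1 := Finset.sum_le_sum hpt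
    rw [← Finset.mul_sum, Finset.sum_sub_distrib, Finset.sum_sub_distrib,
      Finset.sum_const, Finset.sum_const] at h1
    have h2 : (∑ α ∈ N, (q : ℤ) ^ k α) ≤ (N.card : ℤ) * (q : ℤ) ^ s := by
      have := hsumpow
      have hcast : ((∑ α ∈ N, q ^ k α : ℕ) : ℤ) ≤ ((N.card * q ^ s : ℕ) : ℤ) := by
        exact_mod_cast this
      push_cast at hcast
      exact hcast
    simp only [nsmul_eq_mul] at h1
    by_contra hlt
    push_neg at hlt
    have h3 : 0 < K * ((∑ α ∈ N, (k α : ℤ)) - (N.card : ℤ) * s) := by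
      apply mul_pos hKpos
      linarith
    linarith
  have hsumk : (∑ α ∈ N, k α) ≤ N.card * s := by exact_mod_cast hZ
  -- rank-nullity summed
  have hsumr : (∑ α ∈ N, Module.finrank B
        (Submodule.span B (Set.range fun i => (g i).eval α)))
      + (∑ α ∈ N, k α) = N.card * t := by
    rw [← Finset.sum_add_distrib]
    rw [Finset.sum_congr rfl fun α _ => hrn α]
    rw [Finset.sum_const, smul_eq_mul]
  have hle : N.card * (t - s) ≤ ∑ α ∈ N, Module.finrank B
      (Submodule.span B (Set.range fun i => (g i).eval α)) := by
    calc N.card * (t - s) = N.card * t - N.card * s := Nat.mul_sub _ _ _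
      _ ≤ N.card * t - ∑ α ∈ N, k α := Nat.sub_le_sub_left hsumk _
      _ = ∑ α ∈ N, Module.finrank B
          (Submodule.span B (Set.range fun i => (g i).eval α)) := by
          rw [← hsumr]
          omega
  rw [← hcardN]
  exact hle
end

section
/- With g_1,…,g_t chosen according to Construction I, for every α ∈ F∖{α*} the set {g_1(α),…,g_t(α)} is linearly dependent over 𝔽₂; that is, rank₂{g_1(α),…,g_t(α)} ≤ t − 1. -/
open Polynomial

/-- Lemma 3. With `g₁, …, g_t` chosen according to Construction I
(`gᵢ(x) = βᵢ(x - (α* - βᵢ))` for an `𝔽₂`-basis `β₁, …, β_t` of `F = GF(2^t)`),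
for every `α ∈ F \ {α*}` the set `{g₁(α), …, g_t(α)}` is linearly dependent over `𝔽₂`,
i.e. `rank₂ {g₁(α), …, g_t(α)} ≤ t - 1`. -/
theorem constructionI_rank_at_available
    (t : ℕ) (B F : Type*) [Field B] [Fintype B] [Field F] [Fintype F]
    [Algebra B F]
    (hB : Fintype.card B = 2) (ht : Module.finrank B F = t)
    (αstar : F) (β : Module.Basis (Fin t) B F)
    (g : Fin t → F[X])
    (hg : ∀ i, g i = C (β i) * (X - C (αstar - β i)))
    (α : F) (hα : α ≠ αstar) :
    ¬ LinearIndependent B (fun i : Fin t => (g i).eval α) ∧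
    Module.finrank B
      (Submodule.span B (Set.range fun i => (g i).eval α)) ≤ t - 1 := by
  classical
  have : FiniteDimensional B F := Module.Finite.of_finite
  -- every element of B is 0 or 1
  have hb01 : ∀ c : B, c = 0 ∨ c = 1 := by
    intro c
    by_cases hc : c = 0
    · exact Or.inl hc
    · right
      have hcard : Fintype.card Bˣ = 1 := by
        have := Fintype.card_units (α := B)
        omega
      have : Subsingleton Bˣ := Fintype.card_le_one_iff_subsingleton.mp (le_of_eq hcard)
      have := Subsingleton.elim (Units.mk0 c hc) 1
      calc c = ((Units.mk0 c hc : Bˣ) : B) := rfl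
        _ = ((1 : Bˣ) : B) := by rw [this]
        _ = 1 := rfl
  have h2B : (1 + 1 : B) = 0 := by
    rcases hb01 (1 + 1) with h | h
    · exact h
    · exfalso; exact one_ne_zero (by linear_combination h)
  have h2F : (1 + 1 : F) = 0 := by
    have : algebraMap B F (1 + 1) = 0 := by rw [h2B, map_zero]
    simpa using this
  -- the F₂-linear map x ↦ (α - α*) x + x²
  let L : F →ₗ[B] F :=
    { toFun := fun x => (α - αstar) * x + x * x
      map_add' := by
        intro x y
        have : (1 + 1) * (x * y) = 0 := by rw [h2F, zero_mul]
        ring_nf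
        linear_combination this
      map_smul' := by
        intro c x
        rcases hb01 c with h | h <;> simp [h] }
  have key : ∀ i, (g i).eval α = L (β i) := by
    intro i
    rw [hg]
    show (C (β i) * (X - C (αstar - β i))).eval α = (α - αstar) * β i + β i * β i
    simp only [eval_mul, eval_C, eval_sub, eval_X]
    ring
  have hker : L (αstar - α) = 0 := by
    show (α - αstar) * (αstar - α) + (αstar - α) * (αstar - α) = 0
    ring
  have hne : αstar - α ≠ 0 := sub_ne_zero.mpr (Ne.symm hα)
  have hnotli : ¬ LinearIndependent B (fun i : Fin t => (g i).eval α) := by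
    intro hli
    simp only [key] at hli
    have htpos : 0 < t := by
      have : 0 < Module.finrank B F := Module.finrank_pos
      omega
    have : Nonempty (Fin t) := ⟨⟨0, htpos⟩⟩
    have hspan : Submodule.span B (Set.range fun i => L (β i)) = ⊤ :=
      hli.span_eq_top_of_card_eq_finrank (by simp [ht])
    have hrange : LinearMap.range L = ⊤ := by
      rw [eq_top_iff, ← hspan, Submodule.span_le]
      rintro _ ⟨i, rfl⟩
      exact ⟨β i, rfl⟩
    have hsurj : Function.Surjective L := LinearMap.range_eq_top.mp hrange
    have hinj : Function.Injective L := (LinearMap.injective_iff_surjective).mpr hsurj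
    exact hne (hinj (by rw [hker, map_zero]))
  refine ⟨hnotli, ?_⟩
  have hspan2 : Submodule.span B (Set.range fun i => (g i).eval α) = LinearMap.range L := by
    have hfun : (fun i => (g i).eval α) = L ∘ β := _root_.funext key
    have : (Set.range fun i => (g i).eval α) = L '' Set.range β := by
      rw [hfun, Set.range_comp]
    rw [this, Submodule.span_image, β.span_eq, Submodule.map_top]
  rw [hspan2]
  have hrn := LinearMap.finrank_range_add_finrank_ker L
  rw [ht] at hrn
  have hkpos : 0 < Module.finrank B (LinearMap.ker L) := by
    have : Nontrivial (LinearMap.ker L) := by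
      refine Submodule.nontrivial_iff_ne_bot.mpr ?_
      intro hbot
      have : (αstar - α) ∈ LinearMap.ker L := hker
      rw [hbot] at this
      exact hne this
    exact Module.finrank_pos_iff.mpr this
  omega
end

section
/- Let n = 2^t and k ≤ n − 2, and let g_1,…,g_t be chosen according to Construction I. Then: (i) for any two polynomials f, f' ∈ F[x] of degree at most k−1 satisfying Tr(g_i(α)·f(α)) = Tr(g_i(α)·f'(α)) for every α ∈ F∖{α*} and every i ∈ {1,…,t}, one has f(α*) = f'(α*) — so the g_i can be used to repair the codeword symbol f(α*) of the full-length Reed–Solomon code RS(F,k); and (ii) Σ_{α ∈ F∖{α*}} rank₂{g_1(α),…,g_t(α)} ≤ (n−1)(t−1), i.e., the repair bandwidth is at most (n−1)(t−1) bits. -/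
open Polynomial
open scoped Classical

/-- Sum of evaluations of a low-degree polynomial over a finite field vanishes. -/
lemma aux_sum_eval_eq_zero {F : Type*} [Field F] [Fintype F] (p : F[X])
    (hp : p.natDegree < Fintype.card F - 1) : ∑ α : F, p.eval α = 0 := by
  have h : ∀ α : F, p.eval α = ∑ j ∈ Finset.range (p.natDegree + 1), p.coeff j * α ^ j :=
    fun α => Polynomial.eval_eq_sum_range α
  simp_rw [h]
  rw [Finset.sum_comm]
  refine Finset.sum_eq_zero fun j hj => ?_
  have hj' : j < Fintype.card F - 1 := by
    have := Finset.mem_range.mp hj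
    omega
  rw [← Finset.mul_sum, FiniteField.sum_pow_lt_card_sub_one (K := F) j hj', mul_zero]

/-- Theorem 3. Let `n = 2^t` and `k ≤ n - 2`, and let `g₁, …, g_t` be
chosen according to Construction I. Then (i) the traces `Tr(gᵢ(α) f(α))`,
`α ∈ F \ {α*}`, `i ∈ [t]`, determine the codeword symbol `f(α*)` of the full-length
Reed–Solomon code `RS(F, k)`, and (ii) the repair bandwidth is at most `(n-1)(t-1)` bits:
`Σ_{α ∈ F \ {α*}} rank₂ {g₁(α), …, g_t(α)} ≤ (n-1)(t-1)`. -/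
theorem constructionI_repair
    (t k n : ℕ) (B F : Type*) [Field B] [Fintype B] [Field F] [Fintype F]
    [Algebra B F]
    (hB : Fintype.card B = 2) (ht : Module.finrank B F = t)
    (hn : n = 2 ^ t) (hk : k ≤ n - 2)
    (αstar : F) (β : Module.Basis (Fin t) B F)
    (g : Fin t → F[X])
    (hg : ∀ i, g i = C (β i) * (X - C (αstar - β i))) :
    (∀ f f' : F[X], f.degree < (k : WithBot ℕ) → f'.degree < (k : WithBot ℕ) →
      (∀ α : F, α ≠ αstar → ∀ i : Fin t,
        Algebra.trace B F ((g i).eval α * f.eval α)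
          = Algebra.trace B F ((g i).eval α * f'.eval α)) →
      f.eval αstar = f'.eval αstar) ∧
    ∑ α ∈ Finset.univ.erase αstar,
        Module.finrank B (Submodule.span B (Set.range fun i => (g i).eval α))
      ≤ (n - 1) * (t - 1) := by
  haveI : FiniteDimensional B F := Module.Finite.of_basis β
  haveI : Fact (Nat.Prime 2) := ⟨Nat.prime_two⟩
  haveI : CharP B 2 := charP_of_card_eq_prime hB
  haveI : CharP F 2 := charP_of_injective_algebraMap (algebraMap B F).injective 2
  haveI : Algebra.IsSeparable B F := inferInstance
  have h2F : (2 : F) = 0 := CharP.cast_eq_zero F 2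
  have h2B : (2 : B) = 0 := CharP.cast_eq_zero B 2
  have hcard : Fintype.card F = n := by
    rw [Module.card_fintype β, hB, Fintype.card_fin, hn]
  have htpos : 1 ≤ t := by
    by_contra h
    push_neg at h
    interval_cases t
    have := Fintype.one_lt_card (α := F)
    omega
  have hn2 : 2 ≤ n := by
    rw [hn]
    calc 2 = 2 ^ 1 := rfl
    _ ≤ 2 ^ t := Nat.pow_le_pow_right (by norm_num) htpos
  have bsq : ∀ b : B, b * b = b := fun b => by
    have := FiniteField.pow_card b
    rw [hB, pow_two] at this
    exact this
  -- the Frobenius as a B-linear map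
  set φ : F →ₗ[B] F :=
    { toFun := fun x => x * x
      map_add' := fun x y => by linear_combination x * y * h2F
      map_smul' := fun b x => by
        simp only [Algebra.smul_def, RingHom.id_apply]
        rw [show algebraMap B F b * x * (algebraMap B F b * x)
          = (algebraMap B F b * algebraMap B F b) * (x * x) by ring, ← map_mul, bsq b] } with hφ
  have φinj : Function.Injective φ := by
    intro x y hxy
    simp only [hφ, LinearMap.coe_mk, AddHom.coe_mk] at hxy
    have h0 : (x - y) * (x - y) = 0 := by
      linear_combination hxy + (y * y - x * y) * h2F
    exact sub_eq_zero.mp (mul_self_eq_zero.mp h0)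
  have φbij : Function.Bijective φ :=
    ⟨φinj, LinearMap.injective_iff_surjective.mp φinj⟩
  set ψ : F ≃ₗ[B] F := LinearEquiv.ofBijective φ φbij with hψ
  have hψapp : ∀ x : F, ψ x = x * x := fun x => rfl
  -- trace is invariant under the Frobenius
  have trsq : ∀ x : F, Algebra.trace B F (x * x) = Algebra.trace B F x := by
    intro x
    have h1 : ψ 1 = 1 := by rw [hψapp, mul_one]
    have hm : ∀ x y : F, ψ (x * y) = ψ x * ψ y := fun x y => by
      simp only [hψapp]; ring
    have := Algebra.trace_eq_of_algEquiv (AlgEquiv.ofLinearEquiv ψ h1 hm) x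
    rwa [AlgEquiv.ofLinearEquiv_apply, hψapp] at this
  constructor
  · -- part (i)
    intro f f' hf hf' htr
    set d : F[X] := f - f' with hd
    suffices hev : d.eval αstar = 0 by
      have : f.eval αstar - f'.eval αstar = 0 := by simpa [hd] using hev
      exact sub_eq_zero.mp this
    by_cases hd0 : d = 0
    · simp [hd0]
    have hdlt : d.degree < (k : WithBot ℕ) :=
      lt_of_le_of_lt (Polynomial.degree_sub_le f f') (max_lt hf hf')
    have hddeg : d.natDegree < k := (Polynomial.natDegree_lt_iff_degree_lt hd0).mpr hdlt
    have key : ∀ i : Fin t, Algebra.trace B F ((g i).eval αstar * d.eval αstar) = 0 := by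
      intro i
      have hgndeg : (g i).natDegree ≤ 1 := by
        rw [hg i]
        calc (C (β i) * (X - C (αstar - β i))).natDegree
            ≤ (C (β i)).natDegree + (X - C (αstar - β i)).natDegree :=
              Polynomial.natDegree_mul_le
          _ ≤ 1 := by
              rw [Polynomial.natDegree_C, Polynomial.natDegree_X_sub_C]
      have hdeg : ((g i) * d).natDegree < Fintype.card F - 1 := by
        have hmul := Polynomial.natDegree_mul_le (p := g i) (q := d)
        omega
      have hsum := aux_sum_eval_eq_zero ((g i) * d) hdeg
      have h0 : ∑ α : F, Algebra.trace B F ((g i).eval α * d.eval α) = 0 := by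
        have h1 := congrArg (Algebra.trace B F) hsum
        rw [map_sum, map_zero] at h1
        simpa [Polynomial.eval_mul] using h1
      rw [← Finset.add_sum_erase Finset.univ _ (Finset.mem_univ αstar)] at h0
      have hz : ∑ α ∈ Finset.univ.erase αstar,
          Algebra.trace B F ((g i).eval α * d.eval α) = 0 := by
        refine Finset.sum_eq_zero fun α hα => ?_
        have hαne := (Finset.mem_erase.mp hα).1
        have h2 := htr α hαne i
        have h4 : (g i).eval α * d.eval α
            = (g i).eval α * f.eval α - (g i).eval α * f'.eval α := by
          simp only [hd, Polynomial.eval_sub]; ring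
        rw [h4, map_sub, h2, sub_self]
      rw [hz, add_zero] at h0
      exact h0
    have hgαstar : ∀ i : Fin t, (g i).eval αstar = β i * β i := fun i => by
      rw [hg i]
      simp only [Polynomial.eval_mul, Polynomial.eval_C, Polynomial.eval_sub, Polynomial.eval_X]
      ring
    set e0 := d.eval αstar with he0
    have hform : (Algebra.traceForm B F) e0 = 0 := by
      apply (β.map ψ).ext
      intro i
      have hb : (β.map ψ) i = β i * β i := by rw [Module.Basis.map_apply, hψapp]
      rw [hb]
      simp only [Algebra.traceForm_apply, LinearMap.zero_apply]
      rw [mul_comm]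
      have h3 := key i
      rwa [hgαstar i] at h3
    exact (traceForm_nondegenerate B F).1 e0 fun y => by rw [hform]; rfl
  · -- part (ii)
    have hbound : ∀ α ∈ Finset.univ.erase αstar,
        Module.finrank B (Submodule.span B (Set.range fun i => (g i).eval α)) ≤ t - 1 := by
      intro α hα
      have hαne : α ≠ αstar := (Finset.mem_erase.mp hα).1
      set δ := α - αstar with hδ
      have hδ0 : δ ≠ 0 := sub_ne_zero.mpr hαne
      set c : F := δ⁻¹ * δ⁻¹ with hc
      have hc0 : c ≠ 0 := mul_ne_zero (inv_ne_zero hδ0) (inv_ne_zero hδ0)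
      set L : F →ₗ[B] B := (Algebra.traceForm B F) c with hL
      have hspan : Submodule.span B (Set.range fun i => (g i).eval α) ≤ LinearMap.ker L := by
        rw [Submodule.span_le]
        rintro x ⟨i, rfl⟩
        simp only [SetLike.mem_coe, LinearMap.mem_ker, hL, Algebra.traceForm_apply]
        have hev : (g i).eval α = β i * (δ + β i) := by
          rw [hg i]; simp only [Polynomial.eval_mul, Polynomial.eval_C, Polynomial.eval_sub,
            Polynomial.eval_X, hδ]; ring
        have hc_ev : c * (g i).eval α = β i * δ⁻¹ + (β i * δ⁻¹) * (β i * δ⁻¹) := by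
          rw [hev, hc]
          field_simp
        rw [hc_ev, map_add, trsq (β i * δ⁻¹), ← two_mul, h2B, zero_mul]
      have hex : ∃ y : F, Algebra.trace B F (c * y) ≠ 0 := by
        by_contra h
        push_neg at h
        exact hc0 ((traceForm_nondegenerate B F).1 c fun y => by simpa using h y)
      obtain ⟨y, hy⟩ := hex
      have hrank := LinearMap.finrank_range_add_finrank_ker L
      rw [ht] at hrank
      have hrange : 1 ≤ Module.finrank B (LinearMap.range L) := by
        have hnt : Nontrivial (LinearMap.range L) := by
          refine ⟨⟨⟨L y, LinearMap.mem_range_self L y⟩, 0, ?_⟩⟩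
          intro hcontra
          apply hy
          simpa [hL] using congrArg Subtype.val hcontra
        exact Module.finrank_pos_iff.mpr hnt
      have hker : Module.finrank B (LinearMap.ker L) ≤ t - 1 := by omega
      exact le_trans (Submodule.finrank_mono hspan) hker
    calc ∑ α ∈ Finset.univ.erase αstar,
          Module.finrank B (Submodule.span B (Set.range fun i => (g i).eval α))
        ≤ ∑ _α ∈ Finset.univ.erase αstar, (t - 1) := Finset.sum_le_sum hbound
      _ = (n - 1) * (t - 1) := by
          rw [Finset.sum_const, Finset.card_erase_of_mem (Finset.mem_univ _),
            Finset.card_univ, hcard, smul_eq_mul]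
end

section
/- With g_1,…,g_t chosen according to Construction II, one has g_i(α*) = M·β_i^{q^s} for every i ∈ {1,…,t}, and the set {g_1(α*),…,g_t(α*)} has rank t over B = GF(q), for every 1 ≤ s < t. -/
open Polynomial
open scoped Classical

/-- Lemma 4. With `g₁, …, g_t` chosen according to Construction II
(`gᵢ(x) = βᵢ ∏_{j=1}^{q^s-1} (x - (α* - wⱼ⁻¹ βᵢ))`, where `w₁, …, w_{q^s-1}` are the
nonzero elements of an `s`-dimensional `B`-subspace `W` of `F` and `β₁, …, β_t` is a
`B`-basis of `F`), one has `gᵢ(α*) = M βᵢ^{q^s}` for `M = ∏ⱼ wⱼ⁻¹`, and the set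
`{g₁(α*), …, g_t(α*)}` has rank `t` over `B = GF(q)`, for every `1 ≤ s < t`. -/
theorem constructionII_rank_at_erased
    (q t s : ℕ) (B F : Type*) [Field B] [Fintype B] [Field F] [Fintype F]
    [Algebra B F]
    (hq : Fintype.card B = q) (ht : Module.finrank B F = t)
    (hs1 : 1 ≤ s) (hst : s < t)
    (αstar : F) (β : Module.Basis (Fin t) B F)
    (W : Submodule B F) (hW : Module.finrank B W = s)
    (g : Fin t → F[X])
    (hg : ∀ i, g i = C (β i) *
      ∏ w ∈ Finset.univ.filter (fun w : F => w ∈ W ∧ w ≠ 0),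
        (X - C (αstar - w⁻¹ * β i)))
    (M : F)
    (hM : M = ∏ w ∈ Finset.univ.filter (fun w : F => w ∈ W ∧ w ≠ 0), w⁻¹) :
    (∀ i, (g i).eval αstar = M * (β i) ^ (q ^ s)) ∧
    Module.finrank B
      (Submodule.span B (Set.range fun i => (g i).eval αstar)) = t := by
  classical
  haveI : FiniteDimensional B F := β.finiteDimensional_of_finite
  set S := Finset.univ.filter (fun w : F => w ∈ W ∧ w ≠ 0) with hSdef
  have hq1 : 0 < q := hq ▸ Fintype.card_pos
  have hqs1 : 1 ≤ q ^ s := Nat.one_le_pow _ _ hq1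
  -- cardinality of S
  have hScard : S.card = q ^ s - 1 := by
    have hSe : S = (Finset.univ.filter (fun w : F => w ∈ W)).erase 0 := by
      ext w
      simp [hSdef, Finset.mem_erase, and_comm]
    have hWcard : (Finset.univ.filter (fun w : F => w ∈ W)).card = q ^ s := by
      have hc : Fintype.card W = Fintype.card B ^ Module.finrank B W :=
        Module.card_eq_pow_finrank (K := B) (V := W)
      rw [hq, hW] at hc
      rw [← hc]
      simpa using (Fintype.card_subtype (p := fun w : F => w ∈ W)).symm
    have h0 : (0:F) ∈ Finset.univ.filter (fun w : F => w ∈ W) := by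
      simp [W.zero_mem]
    rw [hSe, Finset.card_erase_of_mem h0, hWcard]
  have hM0 : M ≠ 0 := by
    rw [hM]
    apply Finset.prod_ne_zero_iff.mpr
    intro w hw
    simp only [hSdef, Finset.mem_filter] at hw
    exact inv_ne_zero hw.2.2
  -- first part
  have heval : ∀ i, (g i).eval αstar = M * (β i) ^ (q ^ s) := by
    intro i
    rw [hg i]
    simp only [eval_mul, eval_C, eval_prod, eval_sub, eval_X]
    have hco : ∀ w ∈ S, αstar - (αstar - w⁻¹ * β i) = w⁻¹ * β i := by
      intro w _; ring
    rw [Finset.prod_congr rfl hco, Finset.prod_mul_distrib, Finset.prod_const, ← hM,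
      hScard, show q ^ s = (q ^ s - 1) + 1 from (Nat.sub_add_cancel hqs1).symm,
      pow_succ]
    ring_nf
    rw [show 1 + (q ^ s - 1) - 1 = q ^ s - 1 from by omega]
  refine ⟨heval, ?_⟩
  -- characteristic setup
  have hp := ringChar.charP B
  set p := ringChar B with hpdef
  haveI : CharP B p := hp
  haveI hFp : CharP F p := charP_of_injective_algebraMap
    (algebraMap B F).injective p
  obtain ⟨n, hpp, hcard⟩ := FiniteField.card B p
  haveI : Fact p.Prime := ⟨hpp⟩
  have hqs : q ^ s = p ^ (n * s) := by
    rw [← hq, hcard, ← pow_mul]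
  -- linear map
  let φ : F →ₗ[B] F :=
    { toFun := fun x => M * x ^ (q ^ s)
      map_add' := by
        intro x y
        show M * (x + y) ^ (q ^ s) = M * x ^ (q ^ s) + M * y ^ (q ^ s)
        rw [hqs, add_pow_char_pow]
        ring
      map_smul' := by
        intro b x
        simp only [Algebra.smul_def, RingHom.id_apply, mul_pow, ← map_pow]
        have hb : b ^ q ^ s = b := by
          rw [← hq]; exact FiniteField.pow_card_pow s b
        rw [hb]; ring }
  have hφinj : Function.Injective φ := by
    rw [← LinearMap.ker_eq_bot, LinearMap.ker_eq_bot']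
    intro x hx
    have hx' : M * x ^ (q ^ s) = 0 := hx
    have := (mul_eq_zero.mp hx').resolve_left hM0
    exact (pow_eq_zero_iff (Nat.one_le_iff_ne_zero.mp hqs1)).mp this
  have hfun : (fun i => (g i).eval αstar) = φ ∘ β := by
    funext i
    simp [heval i, φ]
  rw [hfun, Set.range_comp, ← Submodule.map_span, β.span_eq, Submodule.map_top,
    LinearMap.finrank_range_of_inj hφinj, ht]
end

section
/- With g_1,…,g_t chosen according to Construction II, for every α ∈ F∖{α*} the set {g_1(α),…,g_t(α)} has rank at most t − s over B = GF(q), for every 1 ≤ s < t. -/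
open Polynomial
open scoped Classical

section Aux

variable {B F : Type*} [Field B] [Fintype B] [Field F] [Fintype F] [Algebra B F]

lemma aux_prod_poly : ∏ a : B, (X - C a) = X ^ Fintype.card B - X := by
  have hcard : 1 < Fintype.card B := Fintype.one_lt_card
  have hne : (X ^ Fintype.card B - X : B[X]) ≠ 0 :=
    FiniteField.X_pow_card_sub_X_ne_zero B hcard
  have hdeg : (X ^ Fintype.card B - X : B[X]).natDegree = Fintype.card B :=
    FiniteField.X_pow_card_sub_X_natDegree_eq B hcard
  have hm : (X ^ Fintype.card B - X : B[X]).Monic := by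
    have h1 : (X : B[X]).degree < (X ^ Fintype.card B : B[X]).degree := by
      rw [degree_X_pow, degree_X]; exact_mod_cast hcard
    have := monic_X_pow (R := B) (n := Fintype.card B)
    exact this.sub_of_left h1
  have hroots := FiniteField.roots_X_pow_card_sub_X B
  have := prod_multiset_X_sub_C_of_monic_of_roots_card_eq hm
    (by rw [hroots, hdeg]; simp)
  rw [hroots] at this
  rw [← this]
  rfl

lemma aux1_s12 (z : F) :
    ∏ c : B, (z - algebraMap B F c) = z ^ Fintype.card B - z := by
  have h := congrArg (aeval z) (aux_prod_poly (B := B))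
  simpa using h

lemma aux2_s12 (y K : F) :
    ∏ c : B, (y - algebraMap B F c * K)
      = y ^ Fintype.card B - K ^ (Fintype.card B - 1) * y := by
  have hcard : 1 < Fintype.card B := Fintype.one_lt_card
  rcases eq_or_ne K 0 with hK | hK
  · subst hK
    rw [zero_pow (by omega : Fintype.card B - 1 ≠ 0)]
    simp
  · have h1 : ∀ c : B, y - algebraMap B F c * K = K * (K⁻¹ * y - algebraMap B F c) := by
      intro c; field_simp
    rw [Finset.prod_congr rfl (fun c _ => h1 c), Finset.prod_mul_distrib,
      Finset.prod_const, Finset.card_univ, aux1_s12 (K⁻¹ * y)]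
    have e1 : K ^ Fintype.card B * (K⁻¹ * y) ^ Fintype.card B = y ^ Fintype.card B := by
      rw [mul_pow, ← mul_assoc, ← mul_pow, mul_inv_cancel₀ hK, one_pow, one_mul]
    have e2 : K ^ Fintype.card B * (K⁻¹ * y) = K ^ (Fintype.card B - 1) * y := by
      have hqq : K ^ Fintype.card B = K ^ (Fintype.card B - 1) * K := by
        rw [← pow_succ]; congr 1; omega
      rw [hqq, mul_assoc, mul_inv_cancel_left₀ hK]
    rw [mul_sub, e1, e2]

lemma pow_card_isLinear : IsLinearMap B (fun x : F => x ^ Fintype.card B) := by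
  obtain ⟨p, hp⟩ := CharP.exists B
  haveI : CharP B p := hp
  haveI hprime : Fact p.Prime := ⟨CharP.char_is_prime B p⟩
  haveI : CharP F p := charP_of_injective_algebraMap (algebraMap B F).injective p
  obtain ⟨n, hn⟩ := FiniteField.card B p
  constructor
  · intro x y
    rw [hn.2, add_pow_char_pow]
  · intro c x
    rw [Algebra.smul_def, Algebra.smul_def, mul_pow, ← map_pow, FiniteField.pow_card]

lemma prod_sub_isLinear (V : Submodule B F) :
    IsLinearMap B (fun x : F => ∏ v ∈ Finset.univ.filter (· ∈ V), (x - v)) := by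
  haveI : FiniteDimensional B F := Module.Finite.of_finite
  suffices H : ∀ (k : ℕ) (V : Submodule B F), Module.finrank B V = k →
      IsLinearMap B (fun x : F => ∏ v ∈ Finset.univ.filter (· ∈ V), (x - v)) from
    H _ V rfl
  intro k
  induction k with
  | zero =>
    intro V hV
    have hbot : V = ⊥ := Submodule.finrank_eq_zero.mp hV
    have hf : Finset.univ.filter (· ∈ V) = {0} := by
      ext x; simp [hbot]
    constructor <;> intros <;> simp [hf]
  | succ k ih =>
    intro V hV
    have b : Module.Basis (Fin (k + 1)) B V := (Module.finBasis B V).reindex (finCongr hV)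
    set f : Fin (k + 1) → F := fun j => (b j : F) with hf
    have hli : LinearIndependent B f := by
      have := b.linearIndependent
      exact this.map' V.subtype (Submodule.ker_subtype V)
    set u : F := f (Fin.last k) with hu
    set V' : Submodule B F := Submodule.span B (Set.range fun j : Fin k => f j.castSucc)
      with hV'def
    have hV' : Module.finrank B V' = k := by
      have hli' : LinearIndependent B (fun j : Fin k => f j.castSucc) :=
        hli.comp _ (Fin.castSucc_injective k)
      rw [hV'def, finrank_span_eq_card hli', Fintype.card_fin]
    have huV' : u ∉ V' := by
      have hnm : (Fin.last k) ∉ Set.range (Fin.castSucc (n := k)) := by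
        rintro ⟨j, hj⟩
        exact absurd hj (Fin.castSucc_lt_last j).ne
      have := hli.notMem_span_image hnm
      rw [← Set.range_comp] at this
      exact this
    have hmemV : ∀ j, f j ∈ V := fun j => (b j).2
    have hV'le : V' ≤ V := Submodule.span_le.mpr (by rintro x ⟨j, rfl⟩; exact hmemV _)
    have key : ∀ x : F, (∏ v ∈ Finset.univ.filter (· ∈ V), (x - v))
        = ∏ p ∈ (Finset.univ : Finset B) ×ˢ Finset.univ.filter (· ∈ V'),
            (x - (p.1 • u + p.2)) := by
      intro x
      refine (Finset.prod_bij (fun p _ => p.1 • u + p.2) ?_ ?_ ?_ ?_).symm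
      · rintro ⟨c, v⟩ hp
        rw [Finset.mem_product, Finset.mem_filter] at hp
        rw [Finset.mem_filter]
        exact ⟨Finset.mem_univ _, V.add_mem (V.smul_mem c (hmemV _)) (hV'le hp.2.2)⟩
      · rintro ⟨c, v⟩ hp ⟨d, w⟩ hq heq
        rw [Finset.mem_product, Finset.mem_filter] at hp hq
        have heq2 : c • u + v = d • u + w := by simpa using heq
        have hv : v ∈ V' := hp.2.2
        have hw : w ∈ V' := hq.2.2
        have hcd : c = d := by
          by_contra hcd
          have h1 : (c - d) • u = w - v := by
            rw [sub_smul, sub_eq_sub_iff_add_eq_add, heq2, add_comm]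
          have h2 : u = (c - d)⁻¹ • (w - v) := by
            rw [← h1, smul_smul, inv_mul_cancel₀ (sub_ne_zero.mpr hcd), one_smul]
          exact huV' (h2 ▸ V'.smul_mem _ (V'.sub_mem hw hv))
        subst hcd
        have hvw : v = w := by
          exact add_left_cancel heq2
        simp [hvw]
      · intro v hv
        rw [Finset.mem_filter] at hv
        set vv : V := ⟨v, hv.2⟩ with hvv
        have hrepr := b.sum_repr vv
        refine ⟨(b.repr vv (Fin.last k),
            ∑ j : Fin k, b.repr vv j.castSucc • f j.castSucc), ?_, ?_⟩
        · rw [Finset.mem_product, Finset.mem_filter]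
          refine ⟨Finset.mem_univ _, Finset.mem_univ _, ?_⟩
          show (∑ j : Fin k, b.repr vv j.castSucc • f j.castSucc) ∈ V'
          exact Submodule.sum_mem _ (fun j _ =>
            V'.smul_mem _ (Submodule.subset_span ⟨j, rfl⟩))
        · have hcoe : (∑ j : Fin (k + 1), b.repr vv j • f j) = v := by
            have := congrArg (Subtype.val) hrepr
            rw [Submodule.coe_sum] at this
            exact this
          rw [← hcoe, Fin.sum_univ_castSucc]
          ring
      · intros; rfl
    have ih' := ih V' hV'
    set φ := IsLinearMap.mk' _ ih' with hφ
    have hφap : ∀ y : F, φ y = ∏ v ∈ Finset.univ.filter (· ∈ V'), (y - v) := fun y => rfl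
    have key2 : ∀ x : F, (∏ v ∈ Finset.univ.filter (· ∈ V), (x - v))
        = (φ x) ^ Fintype.card B - (φ u) ^ (Fintype.card B - 1) * (φ x) := by
      intro x
      rw [key x, Finset.prod_product]
      have inner : ∀ c : B, (∏ v' ∈ Finset.univ.filter (· ∈ V'), (x - (c • u + v')))
          = φ x - algebraMap B F c * (φ u) := by
        intro c
        have h1 : ∀ v' : F, x - (c • u + v') = (x - c • u) - v' := by
          intro v'; ring
        rw [Finset.prod_congr rfl (fun v' _ => h1 v'), ← hφap (x - c • u),
          map_sub, map_smul, Algebra.smul_def]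
      rw [Finset.prod_congr rfl (fun c _ => inner c)]
      exact aux2_s12 (φ x) (φ u)
    have hfr := pow_card_isLinear (B := B) (F := F)
    constructor
    · intro x y
      rw [key2, key2, key2, map_add, hfr.map_add]
      ring
    · intro c x
      rw [key2, key2, map_smul, hfr.map_smul, Algebra.smul_def, Algebra.smul_def,
        Algebra.smul_def]
      ring

lemma prod_sub_eq_zero_iff (V : Submodule B F) (x : F) :
    (∏ v ∈ Finset.univ.filter (· ∈ V), (x - v)) = 0 ↔ x ∈ V := by
  rw [Finset.prod_eq_zero_iff]
  constructor
  · rintro ⟨v, hv, hxv⟩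
    rw [Finset.mem_filter] at hv
    rw [sub_eq_zero] at hxv
    exact hxv ▸ hv.2
  · intro hx
    exact ⟨x, Finset.mem_filter.mpr ⟨Finset.mem_univ _, hx⟩, sub_self x⟩

end Aux

/-- Lemma 6. With `g₁, …, g_t` chosen according to Construction II
(`gᵢ(x) = βᵢ ∏_{j=1}^{q^s-1} (x - (α* - wⱼ⁻¹ βᵢ))`, where `w₁, …, w_{q^s-1}` are the
nonzero elements of an `s`-dimensional `B`-subspace `W` of `F` and `β₁, …, β_t` is a
`B`-basis of `F`), for every `α ∈ F \ {α*}` the set `{g₁(α), …, g_t(α)}` has rank at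
most `t - s` over `B = GF(q)`, for every `1 ≤ s < t`. -/
theorem constructionII_rank_at_available
    (q t s : ℕ) (B F : Type*) [Field B] [Fintype B] [Field F] [Fintype F]
    [Algebra B F]
    (hq : Fintype.card B = q) (ht : Module.finrank B F = t)
    (hs1 : 1 ≤ s) (hst : s < t)
    (αstar : F) (β : Module.Basis (Fin t) B F)
    (W : Submodule B F) (hW : Module.finrank B W = s)
    (g : Fin t → F[X])
    (hg : ∀ i, g i = C (β i) *
      ∏ w ∈ Finset.univ.filter (fun w : F => w ∈ W ∧ w ≠ 0),
        (X - C (αstar - w⁻¹ * β i)))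
    (α : F) (hα : α ≠ αstar) :
    Module.finrank B
      (Submodule.span B (Set.range fun i => (g i).eval α)) ≤ t - s := by
  haveI : FiniteDimensional B F := Module.Finite.of_finite
  set δ : F := α - αstar with hδdef
  have hδ : δ ≠ 0 := sub_ne_zero.mpr hα
  have hδ' : (-δ) ≠ 0 := neg_ne_zero.mpr hδ
  set μ : F →ₗ[B] F := LinearMap.mulLeft B (-δ) with hμdef
  have hμinj : Function.Injective μ := fun a b h => by
    exact mul_left_cancel₀ hδ' h
  set V : Submodule B F := W.map μ with hVdef
  have hVrank : Module.finrank B V = s := by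
    rw [← hW]
    exact (Submodule.equivMapOfInjective μ hμinj W).symm.finrank_eq
  have hmemV : ∀ x : F, (-δ) * x ∈ V ↔ x ∈ W := by
    intro x
    constructor
    · rintro ⟨y, hy, hxy⟩
      have : y = x := mul_left_cancel₀ hδ' hxy
      exact this ▸ hy
    · intro hx; exact ⟨x, hx, rfl⟩
  have hlin := prod_sub_isLinear (B := B) V
  set φ := IsLinearMap.mk' _ hlin with hφ
  have hφap : ∀ y : F, φ y = ∏ v ∈ Finset.univ.filter (· ∈ V), (y - v) := fun y => rfl
  set c : F := ∏ w ∈ Finset.univ.filter (fun w : F => w ∈ W ∧ w ≠ 0), w⁻¹ with hc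
  have hc0 : c ≠ 0 := by
    rw [hc]
    exact Finset.prod_ne_zero_iff.mpr
      (fun w hw => inv_ne_zero (Finset.mem_filter.mp hw).2.2)
  set ψ : F →ₗ[B] F := c • φ with hψ
  have hψap : ∀ y : F, ψ y = c * φ y := fun y => rfl
  have hval : ∀ i, (g i).eval α = ψ (β i) := by
    intro i
    have hev : (g i).eval α
        = β i * ∏ w ∈ Finset.univ.filter (fun w : F => w ∈ W ∧ w ≠ 0),
            (α - (αstar - w⁻¹ * β i)) := by
      rw [hg i]
      simp [eval_prod]
    -- Step A: bijection between V and W products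
    have stepA : (∏ v ∈ Finset.univ.filter (· ∈ V), (β i - v))
        = ∏ w ∈ Finset.univ.filter (· ∈ W), (β i - (-δ) * w) := by
      refine (Finset.prod_nbij' (fun w => (-δ) * w) (fun v => (-δ)⁻¹ * v)
        ?_ ?_ ?_ ?_ ?_).symm
      · intro w hw
        rw [Finset.mem_filter] at hw ⊢
        exact ⟨Finset.mem_univ _, (hmemV w).mpr hw.2⟩
      · intro v hv
        rw [Finset.mem_filter] at hv ⊢
        obtain ⟨y, hy, hxy⟩ := hv.2
        refine ⟨Finset.mem_univ _, ?_⟩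
        have hyv : (-δ)⁻¹ * v = y := by
          rw [← hxy]
          show (-δ)⁻¹ * ((-δ) * y) = y
          exact inv_mul_cancel_left₀ hδ' y
        show (-δ)⁻¹ * v ∈ W
        rw [hyv]
        exact hy
      · intro w _; exact inv_mul_cancel_left₀ hδ' w
      · intro v _; exact mul_inv_cancel_left₀ hδ' v
      · intro w _; rfl
    -- Step B: split off zero
    have hWsplit : Finset.univ.filter (· ∈ W)
        = insert (0 : F) (Finset.univ.filter (fun w : F => w ∈ W ∧ w ≠ 0)) := by
      ext x
      simp only [Finset.mem_filter, Finset.mem_univ, true_and, Finset.mem_insert]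
      constructor
      · intro hx
        rcases eq_or_ne x 0 with h | h
        · exact Or.inl h
        · exact Or.inr ⟨hx, h⟩
      · rintro (rfl | ⟨hx, _⟩)
        · exact W.zero_mem
        · exact hx
    have h0nm : (0 : F) ∉ Finset.univ.filter (fun w : F => w ∈ W ∧ w ≠ 0) := by
      simp
    have stepB : (∏ w ∈ Finset.univ.filter (· ∈ W), (β i - (-δ) * w))
        = β i * ∏ w ∈ Finset.univ.filter (fun w : F => w ∈ W ∧ w ≠ 0),
            (β i + δ * w) := by
      rw [hWsplit, Finset.prod_insert h0nm]
      congr 1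
      · ring
      · apply Finset.prod_congr rfl
        intro w _; ring
    -- Step C
    have stepC : ∀ w : F, w ≠ 0 → α - (αstar - w⁻¹ * β i) = w⁻¹ * (β i + δ * w) := by
      intro w hw
      field_simp
      ring
    rw [hev, hψap, hφap, stepA, stepB]
    rw [Finset.prod_congr rfl (fun w hw =>
      stepC w (Finset.mem_filter.mp hw).2.2), Finset.prod_mul_distrib, ← hc]
    ring
  have hker : LinearMap.ker ψ = V := by
    ext x
    rw [LinearMap.mem_ker, hψap, mul_eq_zero]
    constructor
    · rintro (h | h)
      · exact absurd h hc0
      · exact (prod_sub_eq_zero_iff V x).mp h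
    · intro hx
      exact Or.inr ((prod_sub_eq_zero_iff V x).mpr hx)
  have hrange : Module.finrank B (LinearMap.range ψ) = t - s := by
    have h1 := LinearMap.finrank_range_add_finrank_ker ψ
    rw [hker, hVrank, ht] at h1
    omega
  have hspan : Submodule.span B (Set.range fun i => (g i).eval α) ≤ LinearMap.range ψ := by
    rw [Submodule.span_le]
    rintro _ ⟨i, rfl⟩
    show (g i).eval α ∈ (LinearMap.range ψ : Submodule B F)
    rw [hval i]
    exact LinearMap.mem_range_self ψ (β i)
  calc Module.finrank B (Submodule.span B (Set.range fun i => (g i).eval α))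
      ≤ Module.finrank B (LinearMap.range ψ) := Submodule.finrank_mono hspan
    _ = t - s := hrange
end

section
/- With g_1,…,g_t chosen according to Construction III, one has g_i(α*) = τ·u_i for every i ∈ {1,…,t}, where τ = ∏_{w ∈ W∖{0}} (−w) ≠ 0, and consequently the set {g_1(α*),…,g_t(α*)} has rank t over B = GF(q), for every 1 ≤ s < t. -/
open Polynomial
open scoped Classical

/-- Lemma 7. With `g₁, …, g_t` chosen according to Construction III
(`gᵢ(x) = L_W(uᵢ(x - α*))/(x - α*)` where `L_W(x) = ∏_{w ∈ W} (x - w)` for an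
`s`-dimensional `B`-subspace `W` of `F` and a `B`-basis `u₁, …, u_t` of `F`), one has
`gᵢ(α*) = τ uᵢ` for every `i`, where `τ = ∏_{w ∈ W \ {0}} (-w) ≠ 0`, and consequently
the set `{g₁(α*), …, g_t(α*)}` has rank `t` over `B = GF(q)`, for every `1 ≤ s < t`. -/
theorem constructionIII_rank_at_erased
    (q t s : ℕ) (B F : Type*) [Field B] [Fintype B] [Field F] [Fintype F]
    [Algebra B F]
    (hq : Fintype.card B = q) (ht : Module.finrank B F = t)
    (hs1 : 1 ≤ s) (hst : s < t)
    (αstar : F) (u : Module.Basis (Fin t) B F)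
    (W : Submodule B F) (hW : Module.finrank B W = s)
    (g : Fin t → F[X])
    (hg : ∀ i, g i =
      (∏ w ∈ Finset.univ.filter (fun w : F => w ∈ W),
        (C (u i) * (X - C αstar) - C w)) /ₘ (X - C αstar))
    (τ : F)
    (hτ : τ = ∏ w ∈ Finset.univ.filter (fun w : F => w ∈ W ∧ w ≠ 0), (-w)) :
    τ ≠ 0 ∧
    (∀ i, (g i).eval αstar = τ * u i) ∧
    Module.finrank B
      (Submodule.span B (Set.range fun i => (g i).eval αstar)) = t := by
  have hτ0 : τ ≠ 0 := by
    rw [hτ]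
    apply Finset.prod_ne_zero_iff.2
    intro w hw
    simp only [Finset.mem_filter] at hw
    simpa using hw.2.2
  -- finset equality
  have hset : (Finset.univ.filter (fun w : F => w ∈ W)).erase 0 =
      Finset.univ.filter (fun w : F => w ∈ W ∧ w ≠ 0) := by
    ext w
    simp [Finset.mem_erase, and_comm]
  have h0mem : (0 : F) ∈ Finset.univ.filter (fun w : F => w ∈ W) := by
    simp [W.zero_mem]
  have heval : ∀ i, (g i).eval αstar = τ * u i := by
    intro i
    have hprod : (∏ w ∈ Finset.univ.filter (fun w : F => w ∈ W),
        (C (u i) * (X - C αstar) - C w)) =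
        (X - C αstar) * (C (u i) *
          ∏ w ∈ Finset.univ.filter (fun w : F => w ∈ W ∧ w ≠ 0),
            (C (u i) * (X - C αstar) - C w)) := by
      rw [← hset, ← Finset.mul_prod_erase _ _ h0mem, C_0, sub_zero]
      ring
    have hmonic : Monic (X - C αstar) := monic_X_sub_C αstar
    rw [hg i, hprod, Polynomial.mul_divByMonic_cancel_left _ hmonic]
    simp only [eval_mul, eval_C, eval_prod, eval_sub, eval_X, sub_self, mul_zero,
      zero_sub]
    rw [hτ]
    ring
  refine ⟨hτ0, heval, ?_⟩
  -- the linear equivalence given by multiplication by τ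
  let e : F ≃ₗ[B] F := LinearEquiv.ofLinear (LinearMap.mulLeft B τ)
    (LinearMap.mulLeft B τ⁻¹)
    (by ext x; simp [LinearMap.mulLeft, mul_assoc, ← mul_assoc τ τ⁻¹,
      mul_inv_cancel₀ hτ0])
    (by ext x; simp [LinearMap.mulLeft, ← mul_assoc, inv_mul_cancel₀ hτ0])
  have hfun : (fun i => (g i).eval αstar) = fun i => e (u i) := by
    funext i
    simp only [e, LinearEquiv.ofLinear_apply, LinearMap.mulLeft_apply, heval i]
  rw [hfun]
  have : Set.range (fun i => e (u i)) = (e : F →ₗ[B] F) '' (Set.range u) := by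
    rw [← Set.range_comp]; rfl
  rw [this, Submodule.span_image, u.span_eq, LinearEquiv.finrank_map_eq,
    finrank_top, ht]
end

section
/- With g_1,…,g_t chosen according to Construction III, for every α ∈ F∖{α*} the set {g_1(α),…,g_t(α)} has rank at most t − s over B = GF(q), for every 1 ≤ s < t; indeed g_i(α) = L_W(u_i(α − α*))/(α − α*), and the elements L_W(u_i(α − α*)) all lie in the image L_W(F), a B-subspace of dimension t − s. -/
open Polynomial
open scoped Classical

section Aux

variable {B F : Type*} [Field B] [Fintype B] [Field F] [Fintype F] [Algebra B F]

/-- The linearized polynomial map `x ↦ ∏_{w ∈ W} (x - w)` is `B`-linear. -/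
noncomputable def linW (W : Submodule B F) : F →ₗ[B] F where
  toFun x := ∏ w ∈ Finset.univ.filter (fun w : F => w ∈ W), (x - w)
  map_add' := by
    classical
    intro x y
    set Wfin : Finset F := Finset.univ.filter (fun w : F => w ∈ W) with hWfin
    have hmem : ∀ w : F, w ∈ Wfin ↔ w ∈ W := by
      intro w; simp [hWfin]
    have h0 : (0 : F) ∈ Wfin := (hmem 0).2 W.zero_mem
    have hn : 0 < Wfin.card := Finset.card_pos.2 ⟨0, h0⟩
    set fy : F := ∏ w ∈ Wfin, (y - w) with hfy
    set P : F[X] := ∏ w ∈ Wfin, (X - C (w - y)) with hP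
    set Q : F[X] := ∏ w ∈ Wfin, (X - C w) with hQ
    have hPm : P.Monic := monic_prod_of_monic _ _ (fun w _ => monic_X_sub_C _)
    have hQm : Q.Monic := monic_prod_of_monic _ _ (fun w _ => monic_X_sub_C _)
    have hPd : P.natDegree = Wfin.card := by
      rw [hP, natDegree_prod_of_monic _ _ (fun w _ => monic_X_sub_C _)]
      simp only [natDegree_X_sub_C, Finset.sum_const, smul_eq_mul, mul_one]
    have hQd : Q.natDegree = Wfin.card := by
      rw [hQ, natDegree_prod_of_monic _ _ (fun w _ => monic_X_sub_C _)]
      simp only [natDegree_X_sub_C, Finset.sum_const, smul_eq_mul, mul_one]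
    set p : F[X] := P - Q - C fy with hp
    have hpd : p.natDegree < Wfin.card := by
      rcases eq_or_ne p 0 with h | h
      · simpa [h] using hn
      have h1 : (P - Q).degree < (Wfin.card : ℕ) := by
        have := degree_sub_lt
          (by rw [degree_eq_natDegree hPm.ne_zero, degree_eq_natDegree hQm.ne_zero, hPd, hQd])
          hPm.ne_zero (hPm.leadingCoeff.trans hQm.leadingCoeff.symm)
        rwa [degree_eq_natDegree hPm.ne_zero, hPd] at this
      have h2 : (C fy).degree < ((Wfin.card : ℕ) : WithBot ℕ) := by
        refine lt_of_le_of_lt degree_C_le ?_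
        exact_mod_cast hn
      have hdeg : p.degree < ((Wfin.card : ℕ) : WithBot ℕ) :=
        lt_of_le_of_lt (degree_sub_le _ _) (max_lt h1 h2)
      exact (natDegree_lt_iff_degree_lt h).2 hdeg
    have heval : ∀ w0 ∈ Wfin, p.eval w0 = 0 := by
      intro w0 hw0
      have hPe : P.eval w0 = fy := by
        rw [hP, eval_prod]
        simp only [eval_sub, eval_X, eval_C, hfy]
        refine Finset.prod_nbij' (fun w => w - w0) (fun w => w + w0) ?_ ?_ ?_ ?_ ?_
        · intro w hw
          exact (hmem _).2 (W.sub_mem ((hmem _).1 hw) ((hmem _).1 hw0))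
        · intro w hw
          exact (hmem _).2 (W.add_mem ((hmem _).1 hw) ((hmem _).1 hw0))
        · intro w hw; ring
        · intro w hw; ring
        · intro w hw; ring
      have hQe : Q.eval w0 = 0 := by
        rw [hQ, eval_prod]
        exact Finset.prod_eq_zero hw0 (by simp)
      simp [hp, hPe, hQe]
    have hpz : p = 0 := eq_zero_of_natDegree_lt_card_of_eval_eq_zero' p Wfin heval hpd
    have hkey := congrArg (Polynomial.eval x) hpz
    simp only [hp, eval_sub, eval_C, eval_zero] at hkey
    have hPe : P.eval x = ∏ w ∈ Wfin, (x + y - w) := by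
      rw [hP, eval_prod]
      refine Finset.prod_congr rfl fun w _ => ?_
      simp only [eval_sub, eval_X, eval_C]; ring
    have hQe : Q.eval x = ∏ w ∈ Wfin, (x - w) := by
      rw [hQ, eval_prod]; simp
    rw [hPe, hQe] at hkey
    simp only [hfy] at hkey
    linear_combination hkey
  map_smul' := by
    classical
    intro c x
    set Wfin : Finset F := Finset.univ.filter (fun w : F => w ∈ W) with hWfin
    have hmem : ∀ w : F, w ∈ Wfin ↔ w ∈ W := by
      intro w; simp [hWfin]
    have h0 : (0 : F) ∈ Wfin := (hmem 0).2 W.zero_mem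
    simp only [RingHom.id_apply]
    rcases eq_or_ne c 0 with rfl | hc
    · simp only [zero_smul]
      exact Finset.prod_eq_zero h0 (by simp)
    have hcc : algebraMap B F c ≠ 0 := by
      simpa using (algebraMap B F).injective.ne hc
    set cc : F := algebraMap B F c with hccdef
    have hsmul : ∀ z : F, c • z = cc * z := fun z => Algebra.smul_def c z
    have hre : ∏ w ∈ Wfin, (c • x - w) = ∏ w ∈ Wfin, (cc * x - cc * w) := by
      refine Finset.prod_nbij' (fun w => c⁻¹ • w) (fun w => c • w) ?_ ?_ ?_ ?_ ?_
      · intro w hw; exact (hmem _).2 (W.smul_mem _ ((hmem _).1 hw))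
      · intro w hw; exact (hmem _).2 (W.smul_mem _ ((hmem _).1 hw))
      · intro w hw; rw [smul_smul, mul_inv_cancel₀ hc, one_smul]
      · intro w hw; rw [smul_smul, inv_mul_cancel₀ hc, one_smul]
      · intro w hw
        rw [hsmul x, Algebra.smul_def, map_inv₀, ← hccdef]
        field_simp
    have hfac : ∏ w ∈ Wfin, (cc * x - cc * w) = cc ^ Wfin.card * ∏ w ∈ Wfin, (x - w) := by
      rw [← Finset.prod_const, ← Finset.prod_mul_distrib]
      exact Finset.prod_congr rfl fun w _ => by ring
    have hcard : Wfin.card = Fintype.card B ^ Module.finrank B W := by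
      rw [hWfin, ← Fintype.card_subtype]
      exact Module.card_eq_pow_finrank
    have hpow : cc ^ Wfin.card = cc := by
      rw [hcard, hccdef, ← map_pow, FiniteField.pow_card_pow]
    rw [hre, hfac, hpow, hsmul]

theorem linW_apply (W : Submodule B F) (x : F) :
    linW W x = ∏ w ∈ Finset.univ.filter (fun w : F => w ∈ W), (x - w) := rfl

end Aux

/-- Lemma 8. With `g₁, …, g_t` chosen according to Construction III
(`gᵢ(x) = L_W(uᵢ(x - α*))/(x - α*)` where `L_W(x) = ∏_{w ∈ W} (x - w)`), for every
`α ∈ F \ {α*}` one has `gᵢ(α) = L_W(uᵢ(α - α*))/(α - α*)`, where the elements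
`L_W(uᵢ(α - α*))` all lie in the image `L_W(F)`, and the set `{g₁(α), …, g_t(α)}` has
rank at most `t - s` over `B = GF(q)`, for every `1 ≤ s < t`. -/
theorem constructionIII_rank_at_available
    (q t s : ℕ) (B F : Type*) [Field B] [Fintype B] [Field F] [Fintype F]
    [Algebra B F]
    (hq : Fintype.card B = q) (ht : Module.finrank B F = t)
    (hs1 : 1 ≤ s) (hst : s < t)
    (αstar : F) (u : Module.Basis (Fin t) B F)
    (W : Submodule B F) (hW : Module.finrank B W = s)
    (g : Fin t → F[X])
    (hg : ∀ i, g i =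
      (∏ w ∈ Finset.univ.filter (fun w : F => w ∈ W),
        (C (u i) * (X - C αstar) - C w)) /ₘ (X - C αstar))
    (α : F) (hα : α ≠ αstar) :
    (∀ i, (g i).eval α =
      (∏ w ∈ Finset.univ.filter (fun w : F => w ∈ W), (u i * (α - αstar) - w))
        / (α - αstar)) ∧
    Module.finrank B
      (Submodule.span B (Set.range fun i => (g i).eval α)) ≤ t - s := by
  classical
  have : FiniteDimensional B F := Module.Finite.of_basis u
  set Wfin : Finset F := Finset.univ.filter (fun w : F => w ∈ W) with hWfin
  have hmem : ∀ w : F, w ∈ Wfin ↔ w ∈ W := by intro w; simp [hWfin]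
  have h0 : (0 : F) ∈ Wfin := (hmem 0).2 W.zero_mem
  have hc : α - αstar ≠ 0 := sub_ne_zero.mpr hα
  -- part 1
  have part1 : ∀ i, (g i).eval α =
      (∏ w ∈ Wfin, (u i * (α - αstar) - w)) / (α - αstar) := by
    intro i
    set P : F[X] := ∏ w ∈ Wfin, (C (u i) * (X - C αstar) - C w) with hPdef
    have hroot : P.IsRoot αstar := by
      rw [hPdef, IsRoot, eval_prod]
      exact Finset.prod_eq_zero h0 (by simp)
    have hfac : (X - C αstar) * (P /ₘ (X - C αstar)) = P :=
      mul_divByMonic_eq_iff_isRoot.mpr hroot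
    have := congrArg (Polynomial.eval α) hfac
    rw [eval_mul, eval_sub, eval_X, eval_C] at this
    rw [hg i, ← hPdef]
    rw [eq_div_iff hc]
    rw [mul_comm ((P /ₘ (X - C αstar)).eval α) (α - αstar), this, hPdef, eval_prod]
    exact Finset.prod_congr rfl fun w _ => by simp
  refine ⟨part1, ?_⟩
  -- part 2
  set L : F →ₗ[B] F := linW W with hL
  set φ : F →ₗ[B] F :=
    (LinearMap.mulLeft B (α - αstar)⁻¹).comp
      (L.comp (LinearMap.mulLeft B (α - αstar))) with hφ
  have hφ_apply : ∀ x, φ x = (α - αstar)⁻¹ * L ((α - αstar) * x) := fun x => rfl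
  have hgφ : ∀ i, (g i).eval α = φ (u i) := by
    intro i
    rw [part1 i, hφ_apply, hL, linW_apply]
    rw [div_eq_inv_mul]
    congr 1
    exact Finset.prod_congr rfl fun w _ => by ring_nf
  have hspan : Submodule.span B (Set.range fun i => (g i).eval α) = LinearMap.range φ := by
    have h1 : (fun i => (g i).eval α) = φ ∘ u := _root_.funext hgφ
    rw [h1, Set.range_comp, ← Submodule.map_span, u.span_eq, Submodule.map_top]
  -- the kernel of φ contains (α - αstar)⁻¹ • W, which has dimension s
  set e : F ≃ₗ[B] F := LinearEquiv.ofLinear (LinearMap.mulLeft B (α - αstar)⁻¹)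
      (LinearMap.mulLeft B (α - αstar))
      (by ext x; simp [LinearMap.mulLeft_apply, ← mul_assoc, inv_mul_cancel₀ hc])
      (by ext x; simp [LinearMap.mulLeft_apply, ← mul_assoc, mul_inv_cancel₀ hc]) with he
  have hew : ∀ w : F, e.toLinearMap w = (α - αstar)⁻¹ * w := fun w => by rw [he]; rfl
  have hker : Module.finrank B (LinearMap.ker φ) ≥ s := by
    have hsub : W.map e.toLinearMap ≤ LinearMap.ker φ := by
      rintro x ⟨w, hw, rfl⟩
      rw [LinearMap.mem_ker, hφ_apply]
      have : (α - αstar) * e.toLinearMap w = w := by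
        rw [hew, ← mul_assoc, mul_inv_cancel₀ hc, one_mul]
      rw [this]
      have hLw : L w = 0 := by
        rw [hL, linW_apply]
        exact Finset.prod_eq_zero ((hmem w).2 hw) (by simp)
      rw [hLw, mul_zero]
    calc s = Module.finrank B (W.map e.toLinearMap) := by
            rw [LinearEquiv.finrank_map_eq, hW]
      _ ≤ Module.finrank B (LinearMap.ker φ) := Submodule.finrank_mono hsub
  have hrn : Module.finrank B (LinearMap.range φ) + Module.finrank B (LinearMap.ker φ) =
      Module.finrank B F := LinearMap.finrank_range_add_finrank_ker φ
  rw [hspan]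
  omega
end

section
/- Let n = q^t, 1 ≤ s < t, and k ≤ n − q^s, and let g_1,…,g_t be chosen according to Construction III. Then: (i) for any two polynomials f, f' ∈ F[x] of degree at most k−1 satisfying Tr(g_i(α)·f(α)) = Tr(g_i(α)·f'(α)) for every α ∈ F∖{α*} and every i ∈ {1,…,t}, one has f(α*) = f'(α*) — so the g_i can be used to repair the codeword symbol f(α*) of the full-length Reed–Solomon code RS(F,k); and (ii) Σ_{α ∈ F∖{α*}} rank_q{g_1(α),…,g_t(α)} ≤ (n−1)(t−s), i.e., the repair bandwidth is at most (n−1)(t−s)·log₂q bits. -/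
open Polynomial
open scoped Classical

set_option maxHeartbeats 1000000

section CIIIAux
variable {B F : Type*} [Field B] [Fintype B] [Field F] [Fintype F] [Algebra B F]

set_option linter.unusedSectionVars false

private lemma CIII_line_prod (a : F) (ha : a ≠ 0) (y : F) :
    ∏ c : B, (y - c • a) = y ^ Fintype.card B - a ^ (Fintype.card B - 1) * y := by
  classical
  set q := Fintype.card B with hq
  have hq2 : 2 ≤ q := Fintype.one_lt_card
  set P1 : F[X] := ∏ c : B, (X - C (c • a)) with hP1
  set P2 : F[X] := X ^ q - C (a ^ (q - 1)) * X with hP2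
  have hroot : ∀ c : B, P2.eval (c • a) = 0 := by
    intro c
    have hca : (c • a) ^ q = a ^ (q - 1) * (c • a) := by
      rw [Algebra.smul_def, mul_pow, ← map_pow, FiniteField.pow_card]
      rw [mul_comm (a ^ (q-1)), mul_assoc, ← pow_succ']
      congr 2
      omega
    simp [hP2, hca]
  have hd1 : P1.natDegree = q := by
    rw [hP1, natDegree_prod _ _ (fun c _ => X_sub_C_ne_zero _)]
    simp [q]
  have hm1 : P1.Monic := monic_prod_of_monic _ _ fun c _ => monic_X_sub_C _
  have hm2 : P2.Monic := by
    rw [hP2]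
    monicity!
    simp [show 1 ≤ q by omega, show ¬ q ≤ 1 by omega]
  have hdiff : (P1 - P2) = 0 := by
    by_cases h0 : P1 - P2 = 0
    · exact h0
    refine Polynomial.eq_zero_of_natDegree_lt_card_of_eval_eq_zero (P1 - P2)
      (f := fun c : B => c • a) ?_ ?_ ?_
    · intro c c' hcc
      have : algebraMap B F c = algebraMap B F c' := by
        have h2 := hcc
        simp only [Algebra.smul_def] at h2
        exact mul_right_cancel₀ ha h2
      exact (algebraMap B F).injective this
    · intro c
      rw [eval_sub, hroot c, sub_zero, hP1, eval_prod]
      refine Finset.prod_eq_zero (Finset.mem_univ c) ?_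
      simp
    · have hdeg : (P1 - P2).degree < (q : WithBot ℕ) := by
        have : P2.natDegree = q := by
          rw [hP2]
          compute_degree!
          · simp [show ¬ q = 1 by omega]
          all_goals omega
        refine lt_of_lt_of_le (degree_sub_lt ?_ hm1.ne_zero ?_) ?_
        · rw [degree_eq_natDegree hm1.ne_zero, degree_eq_natDegree hm2.ne_zero, hd1, this]
        · rw [hm1.leadingCoeff, hm2.leadingCoeff]
        · rw [degree_eq_natDegree hm1.ne_zero, hd1]
      rw [← hq]
      exact natDegree_lt_iff_degree_lt h0 |>.mpr (by exact_mod_cast hdeg)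
  have := congrArg (eval y) hdiff
  rw [eval_sub, eval_zero, sub_eq_zero] at this
  have h1 : P1.eval y = ∏ c : B, (y - c • a) := by rw [hP1, eval_prod]; simp
  have h2 : P2.eval y = y ^ q - a ^ (q - 1) * y := by simp [hP2]
  rw [h1, h2] at this
  exact this

private lemma CIII_frob : ∃ Fr : F →ₗ[B] F, ∀ x, Fr x = x ^ Fintype.card B := by
  obtain ⟨p, hp⟩ := CharP.exists B
  haveI := hp
  haveI : CharP F p := charP_of_injective_algebraMap (algebraMap B F).injective p
  haveI hprime : Fact p.Prime := ⟨CharP.char_is_prime B p⟩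
  obtain ⟨f, hpp, hf⟩ := FiniteField.card B p
  refine ⟨{ toFun := fun x => x ^ Fintype.card B, map_add' := ?_, map_smul' := ?_ }, fun _ => rfl⟩
  · intro x y
    simp only [hf]
    exact add_pow_char_pow x y p f
  · intro b x
    simp only [RingHom.id_apply, Algebra.smul_def, mul_pow, ← map_pow, FiniteField.pow_card]

private lemma CIII_subspace_linear :
    ∀ (m : ℕ) (W : Submodule B F), Module.finrank B ↥W = m →
      ∃ ψ : F →ₗ[B] F, ∀ z : F,
        ψ z = ∏ w ∈ Finset.univ.filter (fun w : F => w ∈ W), (z - w) := by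
  classical
  intro m
  induction m using Nat.strong_induction_on with
  | _ m IH =>
  intro W hW
  rcases Nat.eq_zero_or_pos m with hm | hm
  · subst hm
    have hbot : W = ⊥ := Submodule.finrank_eq_zero.mp hW
    subst hbot
    refine ⟨LinearMap.id, fun z => ?_⟩
    have hset : Finset.univ.filter (fun w : F => w ∈ (⊥ : Submodule B F)) = {0} := by
      ext w; simp [Submodule.mem_bot]
    rw [hset]
    simp
  · -- pick v ∈ W, v ≠ 0
    obtain ⟨v, hvW, hv0⟩ : ∃ v ∈ W, v ≠ (0:F) := by
      by_contra hcon; push_neg at hcon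
      have hbot : W = ⊥ := by rw [Submodule.eq_bot_iff]; exact hcon
      rw [hbot] at hW; simp at hW; omega
    obtain ⟨U, hU⟩ := Submodule.exists_isCompl (Submodule.span B {v})
    set W' := U ⊓ W with hW'def
    have hvle : Submodule.span B {v} ≤ W := by
      rw [Submodule.span_le]; simpa using hvW
    have hsup : Submodule.span B {v} ⊔ W' = W := by
      rw [hW'def, sup_comm, inf_comm, inf_sup_assoc_of_le _ hvle, sup_comm,
        hU.sup_eq_top, inf_top_eq]
    have hdisj : W' ⊓ Submodule.span B {v} = ⊥ := by
      rw [hW'def]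
      refine le_antisymm ?_ bot_le
      exact le_trans (inf_le_inf_right _ inf_le_left) (by rw [inf_comm]; exact hU.inf_eq_bot.le)
    -- dimension of W'
    have hdim : Module.finrank B ↥W' = m - 1 := by
      have h1 := Submodule.finrank_sup_add_finrank_inf_eq (Submodule.span B {v}) W'
      rw [hsup, hW] at h1
      rw [inf_comm, hdisj] at h1
      rw [finrank_span_singleton hv0, finrank_bot] at h1
      omega
    obtain ⟨ψ', hψ'⟩ := IH (m - 1) (by omega) W' hdim
    -- v ∉ W'
    have hvW' : v ∉ W' := by
      intro hv
      have : v ∈ W' ⊓ Submodule.span B {v} :=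
        ⟨hv, Submodule.mem_span_singleton_self v⟩
      rw [hdisj] at this
      exact hv0 this
    have ha : ψ' v ≠ 0 := by
      rw [hψ']
      refine Finset.prod_ne_zero_iff.mpr fun w hw => ?_
      rw [Finset.mem_filter] at hw
      exact sub_ne_zero_of_ne (fun hvw => hvW' (hvw ▸ hw.2))
    -- the product over W splits
    have key : ∀ z : F,
        ∏ w ∈ Finset.univ.filter (fun w : F => w ∈ W), (z - w)
          = ∏ c : B, (ψ' z - c • (ψ' v)) := by
      intro z
      have hbij : ∏ w ∈ Finset.univ.filter (fun w : F => w ∈ W), (z - w)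
          = ∏ p ∈ (Finset.univ : Finset B) ×ˢ
              (Finset.univ.filter (fun w : F => w ∈ W')), (z - (p.2 + p.1 • v)) := by
        refine (Finset.prod_bij (fun p _ => p.2 + p.1 • v) ?_ ?_ ?_ ?_).symm
        · rintro ⟨c, w'⟩ hp
          rw [Finset.mem_product, Finset.mem_filter] at hp
          rw [Finset.mem_filter]
          refine ⟨Finset.mem_univ _, ?_⟩
          exact W.add_mem ((inf_le_right : U ⊓ W ≤ W) hp.2.2) (W.smul_mem _ hvW)
        · rintro ⟨c1, w1⟩ hp1 ⟨c2, w2⟩ hp2 heq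
          rw [Finset.mem_product, Finset.mem_filter] at hp1 hp2
          simp only at heq
          have hc : c1 = c2 := by
            by_contra hne
            have hsub : (c1 - c2) • v = w2 - w1 := by
              rw [sub_smul, Algebra.smul_def, Algebra.smul_def]
              rw [Algebra.smul_def, Algebra.smul_def] at heq
              linear_combination heq
            have hvmem : v ∈ W' := by
              have hv' : v = (c1 - c2)⁻¹ • ((c1 - c2) • v) :=
                (inv_smul_smul₀ (sub_ne_zero.mpr hne) v).symm
              rw [hv', hsub]
              exact W'.smul_mem _ (W'.sub_mem hp2.2.2 hp1.2.2)
            exact hvW' hvmem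
          subst hc
          have hw : w1 = w2 := by
            have := heq
            exact add_right_cancel (a := w1) (b := c1 • v) (c := w2) this
          subst hw
          rfl
        · intro w hw
          rw [Finset.mem_filter] at hw
          have hwm : w ∈ Submodule.span B {v} ⊔ W' := hsup ▸ hw.2
          rw [Submodule.mem_sup] at hwm
          obtain ⟨y, hy, zz, hz, hyz⟩ := hwm
          rw [Submodule.mem_span_singleton] at hy
          obtain ⟨c, rfl⟩ := hy
          refine ⟨(c, zz), ?_, ?_⟩
          · rw [Finset.mem_product, Finset.mem_filter]
            exact ⟨Finset.mem_univ _, Finset.mem_univ _, hz⟩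
          · show zz + c • v = w
            rw [← hyz, add_comm]
        · intros; rfl
      rw [hbij, Finset.prod_product]
      refine Finset.prod_congr rfl fun c _ => ?_
      have : ∏ w' ∈ Finset.univ.filter (fun w : F => w ∈ W'), (z - (w' + c • v))
          = ∏ w' ∈ Finset.univ.filter (fun w : F => w ∈ W'), ((z - c • v) - w') := by
        refine Finset.prod_congr rfl fun w' _ => by ring
      rw [this, ← hψ', map_sub, map_smul]
  -- now build the linear map
    obtain ⟨Fr, hFr⟩ := CIII_frob (B := B) (F := F)
    set a := ψ' v with hadef
    refine ⟨Fr.comp ψ' - (LinearMap.mulLeft B (a ^ (Fintype.card B - 1))).comp ψ', fun z => ?_⟩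
    rw [key z, CIII_line_prod a ha (ψ' z)]
    simp [hFr, LinearMap.mulLeft_apply]

end CIIIAux

private lemma CIII_sum_eval (K : Type*) [Field K] [Fintype K] (p : K[X])
    (hp : p.natDegree < Fintype.card K - 1) : ∑ α : K, p.eval α = 0 := by
  have he : ∀ α : K, p.eval α
      = ∑ j ∈ Finset.range (p.natDegree + 1), p.coeff j * α ^ j := by
    intro α
    rw [eval_eq_sum_range]
  simp_rw [he]
  rw [Finset.sum_comm]
  refine Finset.sum_eq_zero fun j hj => ?_
  rw [← Finset.mul_sum, FiniteField.sum_pow_lt_card_sub_one (K := K) j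
    (by rw [Finset.mem_range] at hj; omega), mul_zero]

/-- Theorem 5. Let `n = q^t`, `1 ≤ s < t`, `k ≤ n - q^s`, and let
`g₁, …, g_t` be chosen according to Construction III. Then (i) the traces
`Tr(gᵢ(α) f(α))`, `α ∈ F \ {α*}`, `i ∈ [t]`, determine the codeword symbol `f(α*)` of
the full-length Reed–Solomon code `RS(F, k)`, and (ii) the repair bandwidth is at most
`(n-1)(t-s)` sub-symbols:
`Σ_{α ∈ F \ {α*}} rank_q {g₁(α), …, g_t(α)} ≤ (n-1)(t-s)`. -/
theorem constructionIII_repair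
    (q t s k n : ℕ) (B F : Type*) [Field B] [Fintype B] [Field F] [Fintype F]
    [Algebra B F]
    (hq : Fintype.card B = q) (ht : Module.finrank B F = t)
    (hs1 : 1 ≤ s) (hst : s < t)
    (hn : n = q ^ t) (hk : k ≤ n - q ^ s)
    (αstar : F) (u : Module.Basis (Fin t) B F)
    (W : Submodule B F) (hW : Module.finrank B W = s)
    (g : Fin t → F[X])
    (hg : ∀ i, g i =
      (∏ w ∈ Finset.univ.filter (fun w : F => w ∈ W),
        (C (u i) * (X - C αstar) - C w)) /ₘ (X - C αstar)) :
    (∀ f f' : F[X], f.degree < (k : WithBot ℕ) → f'.degree < (k : WithBot ℕ) →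
      (∀ α : F, α ≠ αstar → ∀ i : Fin t,
        Algebra.trace B F ((g i).eval α * f.eval α)
          = Algebra.trace B F ((g i).eval α * f'.eval α)) →
      f.eval αstar = f'.eval αstar) ∧
    ∑ α ∈ Finset.univ.erase αstar,
        Module.finrank B (Submodule.span B (Set.range fun i => (g i).eval α))
      ≤ (n - 1) * (t - s) := by
  classical
  have hq2 : 2 ≤ q := hq ▸ Fintype.one_lt_card
  have hcardF : Fintype.card F = n := by
    rw [hn, ← hq, ← ht, Module.card_eq_pow_finrank (K := B) (V := F)]
  set WS := Finset.univ.filter (fun w : F => w ∈ W) with hWS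
  have h0W : (0:F) ∈ WS := by simp [hWS, W.zero_mem]
  have hcardWS : WS.card = q ^ s := by
    have h1 : Fintype.card ↥W = WS.card := Fintype.card_subtype _
    rw [← h1, Module.card_eq_pow_finrank (K := B) (V := ↥W), hq, hW]
  have hu0 : ∀ i, u i ≠ 0 := fun i => u.ne_zero i
  have hfac : ∀ (i : Fin t) (w : F), C (u i) * (X - C αstar) - C w
      = C (u i) * X + C (-(u i * αstar) - w) := by
    intro i w
    rw [map_sub, map_neg, map_mul]
    ring
  have hfac_deg : ∀ (i : Fin t) (w : F),
      (C (u i) * (X - C αstar) - C w).natDegree = 1 := by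
    intro i w
    rw [hfac]
    exact natDegree_linear (hu0 i)
  have hfac_ne : ∀ (i : Fin t), ∀ w ∈ WS, C (u i) * (X - C αstar) - C w ≠ 0 := by
    intro i w _ hzero
    have := hfac_deg i w
    rw [hzero] at this
    simp at this
  have hProot : ∀ i : Fin t,
      IsRoot (∏ w ∈ WS, (C (u i) * (X - C αstar) - C w)) αstar := by
    intro i
    rw [IsRoot, eval_prod]
    refine Finset.prod_eq_zero h0W ?_
    simp
  have hgP : ∀ i, (X - C αstar) * g i
      = ∏ w ∈ WS, (C (u i) * (X - C αstar) - C w) := by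
    intro i
    rw [hg i]
    exact mul_divByMonic_eq_iff_isRoot.mpr (hProot i)
  have hPne : ∀ i, (∏ w ∈ WS, (C (u i) * (X - C αstar) - C w)) ≠ 0 := by
    intro i
    exact Finset.prod_ne_zero_iff.mpr (hfac_ne i)
  have hgne : ∀ i, g i ≠ 0 := by
    intro i hzero
    have := hgP i
    rw [hzero, mul_zero] at this
    exact hPne i this.symm
  have hPdeg : ∀ i, (∏ w ∈ WS, (C (u i) * (X - C αstar) - C w)).natDegree = q ^ s := by
    intro i
    rw [natDegree_prod _ _ (hfac_ne i)]
    rw [Finset.sum_congr rfl (fun w hw => hfac_deg i w)]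
    simp [hcardWS]
  have hgdeg : ∀ i, (g i).natDegree = q ^ s - 1 := by
    intro i
    have h1 := hPdeg i
    rw [← hgP i, natDegree_mul (X_sub_C_ne_zero αstar) (hgne i), natDegree_X_sub_C] at h1
    omega
  constructor
  · -- part (i)
    intro f f' hdf hdf' htr
    have key : (f - f').eval αstar = 0 := by
      by_cases hh : f - f' = 0
      · rw [hh, eval_zero]
      have hk1 : 1 ≤ k := by
        by_contra hcon
        have hk0 : k = 0 := by omega
        subst hk0
        have hf0 : f = 0 := by
          rw [← degree_eq_bot]
          exact (Nat.WithBot.lt_zero_iff).mp (by exact_mod_cast hdf)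
        have hf'0 : f' = 0 := by
          rw [← degree_eq_bot]
          exact (Nat.WithBot.lt_zero_iff).mp (by exact_mod_cast hdf')
        exact hh (by rw [hf0, hf'0, sub_zero])
      have hdh : (f - f').natDegree < k := by
        rw [natDegree_lt_iff_degree_lt hh]
        exact lt_of_le_of_lt (degree_sub_le f f') (max_lt hdf hdf')
      have hqs_lt : q ^ s < n := by
        rw [hn]
        exact Nat.pow_lt_pow_right hq2 hst
      have hqs1 : 1 ≤ q ^ s := Nat.one_le_pow _ _ (by omega)
      have hdgh : ∀ i, ((g i) * (f - f')).natDegree < Fintype.card F - 1 := by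
        intro i
        rw [natDegree_mul (hgne i) hh, hgdeg i, hcardF]
        omega
      have hsum0 : ∀ i, Algebra.trace B F ((g i).eval αstar * (f - f').eval αstar) = 0 := by
        intro i
        have h1 : ∑ α : F, ((g i) * (f - f')).eval α = 0 := CIII_sum_eval F _ (hdgh i)
        have h2 : ∑ α ∈ Finset.univ.erase αstar, ((g i) * (f - f')).eval α
            + ((g i) * (f - f')).eval αstar = 0 := by
          rw [Finset.sum_erase_add _ _ (Finset.mem_univ αstar)]
          exact h1
        have h3 : ((g i) * (f - f')).eval αstar
            = - ∑ α ∈ Finset.univ.erase αstar, ((g i) * (f - f')).eval α := by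
          linear_combination h2
        have h4 : ∀ α ∈ Finset.univ.erase αstar,
            Algebra.trace B F (((g i) * (f - f')).eval α) = 0 := by
          intro α hα
          rw [Finset.mem_erase] at hα
          rw [eval_mul, eval_sub, mul_sub, map_sub, htr α hα.1 i, sub_self]
        have h5 : Algebra.trace B F (((g i) * (f - f')).eval αstar) = 0 := by
          rw [h3, map_neg, map_sum, Finset.sum_eq_zero h4, neg_zero]
        rw [← eval_mul]
        exact h5
      -- compute g i at αstar
      have hgfac : ∀ i, g i = C (u i)
          * ∏ w ∈ WS.erase 0, (C (u i) * (X - C αstar) - C w) := by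
        intro i
        have h1 : (X - C αstar) * g i
            = (X - C αstar) * (C (u i) * ∏ w ∈ WS.erase 0, (C (u i) * (X - C αstar) - C w)) := by
          rw [hgP i, ← Finset.mul_prod_erase _ _ h0W]
          rw [map_zero, sub_zero]
          ring
        exact mul_left_cancel₀ (X_sub_C_ne_zero αstar) h1
      have hgstar : ∀ i, (g i).eval αstar = u i * ∏ w ∈ WS.erase 0, (-w) := by
        intro i
        rw [hgfac i, eval_mul, eval_C, eval_prod]
        congr 1
        refine Finset.prod_congr rfl fun w hw => ?_
        simp
      have hc0 : (∏ w ∈ WS.erase 0, (-w)) ≠ 0 := by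
        refine Finset.prod_ne_zero_iff.mpr fun w hw => ?_
        rw [Finset.mem_erase] at hw
        simpa using hw.1
      set c0 := ∏ w ∈ WS.erase 0, (-w) with hc0def
      set x := (f - f').eval αstar with hxdef
      have hL : ∀ i, Algebra.trace B F ((c0 * x) * u i) = 0 := by
        intro i
        have h1 := hsum0 i
        rw [hgstar i] at h1
        have h2 : (c0 * x) * u i = u i * c0 * x := by ring
        rw [h2]
        exact h1
      have hLmap : ((Algebra.trace B F).comp (LinearMap.mulLeft B (c0 * x))) = 0 := by
        refine Module.Basis.ext u fun i => ?_
        simpa [mul_assoc] using hL i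
      have hx0 : c0 * x = 0 := by
        refine (traceForm_nondegenerate B F).1 (c0 * x) fun y => ?_
        have h6 := LinearMap.congr_fun hLmap y
        simpa [Algebra.traceForm_apply, mul_assoc] using h6
      rcases mul_eq_zero.mp hx0 with h | h
      · exact absurd h hc0
      · exact h
    rw [eval_sub, sub_eq_zero] at key
    exact key
  · -- part (ii)
    have hbound : ∀ α ∈ Finset.univ.erase αstar,
        Module.finrank B ↥(Submodule.span B (Set.range fun i => (g i).eval α)) ≤ t - s := by
      intro α hα
      rw [Finset.mem_erase] at hα
      have hβ : α - αstar ≠ 0 := sub_ne_zero_of_ne hα.1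
      obtain ⟨ψ, hψ⟩ := CIII_subspace_linear (B := B) (F := F) (Module.finrank B ↥W) W rfl
      set θ : F →ₗ[B] F :=
        (LinearMap.mulLeft B (α - αstar)⁻¹).comp
          (ψ.comp (LinearMap.mulRight B (α - αstar))) with hθdef
      have hθ : ∀ z : F, θ z = (α - αstar)⁻¹ * ψ (z * (α - αstar)) := fun z => rfl
      have hgθ : ∀ i, (g i).eval α = θ (u i) := by
        intro i
        have h1 : (α - αstar) * (g i).eval α = ψ (u i * (α - αstar)) := by
          have h2 := congrArg (eval α) (hgP i)
          rw [eval_mul, eval_sub, eval_X, eval_C] at h2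
          rw [h2, eval_prod, hψ]
          refine Finset.prod_congr rfl fun w hw => ?_
          simp
        rw [hθ, ← h1, inv_mul_cancel_left₀ hβ]
      have hspan : Submodule.span B (Set.range fun i => (g i).eval α)
          = LinearMap.range θ := by
        have h1 : (Set.range fun i => (g i).eval α) = θ '' Set.range u := by
          rw [← Set.range_comp]
          exact congrArg Set.range (funext fun i => hgθ i)
        rw [h1, Submodule.span_image, u.span_eq, Submodule.map_top]
      rw [hspan]
      have hker : s ≤ Module.finrank B ↥(LinearMap.ker θ) := by
        have hmap : W.map (LinearMap.mulRight B (α - αstar)⁻¹) ≤ LinearMap.ker θ := by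
          rintro y ⟨w, hwW', rfl⟩
          have hwW : w ∈ W := hwW'
          rw [LinearMap.mem_ker, hθ]
          have h7 : (LinearMap.mulRight B (α - αstar)⁻¹) w * (α - αstar) = w := by
            simp only [LinearMap.mulRight_apply]
            field_simp
          rw [h7, hψ]
          rw [Finset.prod_eq_zero (show w ∈ WS from by simp [hWS, hwW]) (by simp), mul_zero]
        have hinj : Function.Injective (LinearMap.mulRight B ((α - αstar)⁻¹ : F)) := by
          intro x y hxy
          simp only [LinearMap.mulRight_apply] at hxy
          exact mul_right_cancel₀ (inv_ne_zero hβ) hxy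
        have heq : Module.finrank B ↥(W.map (LinearMap.mulRight B (α - αstar)⁻¹)) = s := by
          rw [← hW]
          exact (Submodule.equivMapOfInjective _ hinj W).finrank_eq.symm
        calc s = _ := heq.symm
          _ ≤ _ := Submodule.finrank_mono hmap
      have hrn := LinearMap.finrank_range_add_finrank_ker θ
      rw [ht] at hrn
      omega
    calc ∑ α ∈ Finset.univ.erase αstar,
          Module.finrank B (Submodule.span B (Set.range fun i => (g i).eval α))
        ≤ (Finset.univ.erase αstar).card * (t - s) := by
          simpa using Finset.sum_le_card_nsmul _ _ _ hbound
      _ = (n - 1) * (t - s) := by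
          rw [Finset.card_erase_of_mem (Finset.mem_univ _), Finset.card_univ, hcardF]
end
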